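/- arXiv:2111.02181 — 5 statements merged into one kernel-verified Lean document; each statement's English description precedes it below -/
import Mathlib

section
/- In the symmetric case α = 1/2 (so β = 1/2), the coefficients of the expected-end generating function satisfy lim_{n→∞} ([z^n]E)/√n = 2/√π, where [z^n]E denotes the n-th coefficient of E. -/
open PowerSeries Filter

noncomputable section

/-- The expected-end generating function `E = Σ_k 2k·f_k + Σ_k (2k+1)·g_k`; for each `n`
the support condition makes the series of `n`-th coefficients a finite sum. -/
def expectedEnd (f g : ℕ → PowerSeries ℝ) : PowerSeries ℝ :=
  PowerSeries.mk fun n =>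
    ∑' k : ℕ, ((2 * k : ℝ) * PowerSeries.coeff n (f k)
      + (2 * (k : ℝ) + 1) * PowerSeries.coeff n (g k))

namespace EEAux

lemma pascal2 (n k : ℕ) : (n+2).choose (k+2) = n.choose k + 2*n.choose (k+1) + n.choose (k+2) := by
  rw [show n+2 = (n+1)+1 from rfl, Nat.choose_succ_succ (n+1) (k+1),
    Nat.choose_succ_succ n k, Nat.choose_succ_succ n (k+1)]
  ring

lemma pascal1 (m : ℕ) : (2*m+2).choose (m+1) = 2*((2*m).choose m) + 2*((2*m).choose (m+1)) := by
  have h1 : (2*m+2).choose (m+1) = (2*m+1).choose m + (2*m+1).choose (m+1) :=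
    Nat.choose_succ_succ _ _
  have h2 : (2*m+1).choose m = (2*m+1).choose (m+1) := by
    have := Nat.choose_symm (show m+1 ≤ 2*m+1 by omega)
    rwa [show 2*m+1-(m+1) = m from by omega] at this
  have h3 : (2*m+1).choose (m+1) = (2*m).choose m + (2*m).choose (m+1) :=
    Nat.choose_succ_succ _ _
  omega

/-- claimed coefficient of `g N` (and of `f (N+1)`). -/
def pc (m N : ℕ) : ℝ := ((2*m).choose (m+N+1) : ℝ) / 4^m
/-- claimed coefficient of `f 0 + fQ`. -/
def qc (m : ℕ) : ℝ := ((2*m).choose m : ℝ) / 4^m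

lemma qc_succ (m : ℕ) : qc (m+1) = 1/2 * pc m 0 + 1/2 * qc m := by
  have key : ((2*m+2).choose (m+1) : ℝ) = 2*((2*m).choose m) + 2*((2*m).choose (m+1)) := by
    exact_mod_cast congrArg (Nat.cast : ℕ → ℝ) (pascal1 m)
  simp only [qc, pc, Nat.add_zero]
  rw [show 2*(m+1) = 2*m+2 from by ring, key, pow_succ]
  have h4 : (4:ℝ)^m ≠ 0 := by positivity
  field_simp
  ring

lemma pc_succ_zero (m : ℕ) : pc (m+1) 0 = 1/4*qc m + 1/4*pc m 1 + 1/2*pc m 0 := by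
  have key : ((2*m+2).choose (m+2) : ℝ)
      = ((2*m).choose m : ℝ) + 2*((2*m).choose (m+1)) + ((2*m).choose (m+2)) := by
    exact_mod_cast congrArg (Nat.cast : ℕ → ℝ) (pascal2 (2*m) m)
  simp only [qc, pc, Nat.add_zero]
  rw [show 2*(m+1) = 2*m+2 from by ring, show m+1+1 = m+2 from rfl, key, pow_succ]
  have h4 : (4:ℝ)^m ≠ 0 := by positivity
  field_simp
  ring

lemma pc_succ_succ (m N : ℕ) :
    pc (m+1) (N+1) = 1/4*pc m N + 1/2*pc m (N+1) + 1/4*pc m (N+2) := by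
  have key : ((2*m+2).choose (m+N+3) : ℝ)
      = ((2*m).choose (m+N+1) : ℝ) + 2*((2*m).choose (m+N+2)) + ((2*m).choose (m+N+3)) := by
    exact_mod_cast congrArg (Nat.cast : ℕ → ℝ) (pascal2 (2*m) (m+N+1))
  simp only [pc]
  rw [show 2*(m+1) = 2*m+2 from by ring, show m+1+(N+1)+1 = m+N+3 from by ring,
    show m+(N+1)+1 = m+N+2 from by ring, show m+(N+2)+1 = m+N+3 from by ring,
    show m+N+1+1 = m+N+2 from rfl, key, pow_succ]
  have h4 : (4:ℝ)^m ≠ 0 := by positivity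
  field_simp
  ring

lemma pc_zero (N : ℕ) : pc 0 N = 0 := by
  simp [pc, Nat.choose_eq_zero_of_lt (show 0 < N+1 by omega)]

lemma pc_diag (n : ℕ) : pc n n = 0 := by
  simp [pc, Nat.choose_eq_zero_of_lt (show 2*n < n+n+1 by omega)]

lemma coeff_CXmul (a : ℝ) (φ : PowerSeries ℝ) (m : ℕ) :
    coeff (m+1) (C a * X * φ) = a * coeff m φ := by
  rw [mul_assoc, coeff_C_mul, coeff_succ_X_mul]

lemma coeff_zero_CXmul (a : ℝ) (φ : PowerSeries ℝ) :
    coeff 0 (C a * X * φ) = 0 := by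
  rw [mul_assoc, coeff_C_mul, coeff_zero_X_mul, mul_zero]

lemma natSumHalf (n : ℕ) :
    (2*n).choose n + 2 * ∑ i ∈ Finset.range n, (2*n).choose (n+1+i) = 4^n := by
  have h1 : ∑ j ∈ Finset.range (2*n+1), (2*n).choose j = 4^n := by
    rw [Nat.sum_range_choose, pow_mul]
    norm_num
  have hsplit : ∑ j ∈ Finset.range (2*n+1), (2*n).choose j
      = (∑ j ∈ Finset.range (n+1), (2*n).choose j)
        + ∑ i ∈ Finset.range n, (2*n).choose (n+1+i) := by
    rw [show 2*n+1 = (n+1)+n from by omega,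
      Finset.sum_range_add (fun j => (2*n).choose j) (n+1) n]
  have h2 : ∑ j ∈ Finset.range (n+1), (2*n).choose j
      = ∑ j ∈ Finset.range (n+1), (2*n).choose (n+j) := by
    calc ∑ j ∈ Finset.range (n+1), (2*n).choose j
        = ∑ j ∈ Finset.range (n+1), (2*n).choose (n + (n+1-1-j)) := by
          refine Finset.sum_congr rfl fun j hj => ?_
          have hj' : j ≤ n := by
            have := Finset.mem_range.mp hj; omega
          rw [show n + (n+1-1-j) = 2*n - j from by omega]
          exact (Nat.choose_symm (show j ≤ 2*n by omega)).symm
      _ = ∑ j ∈ Finset.range (n+1), (2*n).choose (n+j) :=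
          Finset.sum_range_reflect (fun j => (2*n).choose (n+j)) (n+1)
  have hrefl : ∑ j ∈ Finset.range (n+1), (2*n).choose (n+j)
      = (2*n).choose n + ∑ i ∈ Finset.range n, (2*n).choose (n+1+i) := by
    rw [Finset.sum_range_succ' (fun j => (2*n).choose (n+j)) n]
    simp only [Nat.add_zero]
    rw [add_comm]
    congr 1
    exact Finset.sum_congr rfl fun i _ => by rw [show n+(i+1) = n+1+i from by omega]
  omega

/-- telescoping identity `(i+1)·C(2n, n+i+1) = n·(C(2n-1, n+i) − C(2n-1, n+i+1))`
in the form with `n = m+1`. -/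
lemma telescope (m i : ℕ) :
    ((i:ℝ)+1) * (((2*(m+1)).choose ((m+1)+i+1)) : ℝ)
      = ((m:ℝ)+1) * (((2*m+1).choose (m+1+i) : ℝ) - ((2*m+1).choose (m+1+i+1) : ℝ)) := by
  have hp : ((2*(m+1)).choose ((m+1)+i+1) : ℝ)
      = ((2*m+1).choose (m+1+i) : ℝ) + ((2*m+1).choose (m+1+i+1) : ℝ) := by
    have : (2*(m+1)).choose ((m+1)+i+1) = (2*m+1).choose (m+1+i) + (2*m+1).choose (m+1+i+1) := by
      rw [show 2*(m+1) = (2*m+1)+1 from by ring, show (m+1)+i+1 = (m+1+i)+1 from by ring]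
      exact Nat.choose_succ_succ _ _
    exact_mod_cast congrArg (Nat.cast : ℕ → ℝ) this
  have hs : (2*((m:ℝ)+1)) * ((2*m+1).choose (m+1+i) : ℝ)
      = ((2*(m+1)).choose ((m+1)+i+1) : ℝ) * ((m:ℝ)+1+i+1) := by
    have := Nat.add_one_mul_choose_eq (2*m+1) (m+1+i)
    have h2 : (2*m+1+1) * (2*m+1).choose (m+1+i)
        = (2*(m+1)).choose ((m+1)+i+1) * (m+1+i+1) := by
      rw [show 2*(m+1) = 2*m+1+1 from by ring, show (m+1)+i+1 = (m+1+i)+1 from by ring]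
      exact_mod_cast this
    have := congrArg (Nat.cast : ℕ → ℝ) h2
    push_cast at this ⊢
    linarith [this]
  push_cast at hp hs ⊢
  linear_combination (-1 : ℝ) * hs - ((m:ℝ)+1) * hp

lemma half (m : ℕ) : (2*(m+1)).choose (m+1) = 2*((2*m+1).choose (m+1)) := by
  have h1 : (2*m+2).choose (m+1) = (2*m+1).choose m + (2*m+1).choose (m+1) :=
    Nat.choose_succ_succ _ _
  have h2 : (2*m+1).choose m = (2*m+1).choose (m+1) := by
    have := Nat.choose_symm (show m+1 ≤ 2*m+1 by omega)
    rwa [show 2*m+1-(m+1) = m from by omega] at this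
  rw [show 2*(m+1) = 2*m+2 from by ring]
  omega

lemma sumId (n : ℕ) :
    ∑ i ∈ Finset.range n, (4*(i:ℝ)+3) * ((2*n).choose (n+i+1) : ℝ)
      = (2*(n:ℝ) + 1/2) * ((2*n).choose n : ℝ) - 4^n/2 := by
  cases n with
  | zero => norm_num
  | succ m =>
    have hS : ((2*(m+1)).choose (m+1) : ℝ)
        + 2 * ∑ i ∈ Finset.range (m+1), ((2*(m+1)).choose ((m+1)+i+1) : ℝ) = 4^(m+1) := by
      have h0 := natSumHalf (m+1)
      have hc : ∑ i ∈ Finset.range (m+1), ((2*(m+1)).choose ((m+1)+1+i))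
          = ∑ i ∈ Finset.range (m+1), ((2*(m+1)).choose ((m+1)+i+1)) :=
        Finset.sum_congr rfl fun i _ => by rw [show (m+1)+1+i = (m+1)+i+1 from by omega]
      rw [hc] at h0
      have := congrArg (Nat.cast : ℕ → ℝ) h0
      push_cast at this
      convert this using 2
    have hT : ∑ i ∈ Finset.range (m+1), ((i:ℝ)+1) * ((2*(m+1)).choose ((m+1)+i+1) : ℝ)
        = ((m:ℝ)+1) * ((2*m+1).choose (m+1) : ℝ) := by
      have h1 : ∀ i ∈ Finset.range (m+1), ((i:ℝ)+1) * ((2*(m+1)).choose ((m+1)+i+1) : ℝ)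
          = ((m:ℝ)+1) * (((2*m+1).choose (m+1+i) : ℝ) - ((2*m+1).choose (m+1+(i+1)) : ℝ)) := by
        intro i _
        rw [show m+1+(i+1) = m+1+i+1 from by omega]
        exact telescope m i
      rw [Finset.sum_congr rfl h1, ← Finset.mul_sum,
        Finset.sum_range_sub' (fun i => ((2*m+1).choose (m+1+i) : ℝ)) (m+1)]
      simp only [Nat.add_zero]
      rw [show m+1+(m+1) = 2*m+2 from by omega,
        Nat.choose_eq_zero_of_lt (show 2*m+1 < 2*m+2 by omega)]
      simp
    have hhalf : ((2*(m+1)).choose (m+1) : ℝ) = 2*((2*m+1).choose (m+1) : ℝ) := by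
      exact_mod_cast congrArg (Nat.cast : ℕ → ℝ) (half m)
    have hfin : ∑ i ∈ Finset.range (m+1), (4*(i:ℝ)+3) * ((2*(m+1)).choose ((m+1)+i+1) : ℝ)
        = 4*(∑ i ∈ Finset.range (m+1), ((i:ℝ)+1) * ((2*(m+1)).choose ((m+1)+i+1) : ℝ))
          - ∑ i ∈ Finset.range (m+1), ((2*(m+1)).choose ((m+1)+i+1) : ℝ) := by
      rw [Finset.mul_sum, ← Finset.sum_sub_distrib]
      exact Finset.sum_congr rfl fun i _ => by ring
    rw [hfin, hT]
    push_cast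
    push_cast at hS hhalf
    linear_combination (-1/2 : ℝ)*hS + (-(2*(m:ℝ)+2))*hhalf

lemma cb_eq (n : ℕ) (hn : 1 ≤ n) :
    Real.sqrt n * ((2*n).choose n : ℝ) / 4^n
      = Stirling.stirlingSeq (2*n) / (Stirling.stirlingSeq n)^2 := by
  have hnp : (0:ℝ) < n := by exact_mod_cast hn
  set s : ℝ := Real.sqrt n with hsdef
  have hs0 : 0 < s := Real.sqrt_pos.mpr hnp
  have hss : s * s = (n:ℝ) := Real.mul_self_sqrt hnp.le
  have hfac : ((2*n).choose n : ℝ) * ((n.factorial : ℝ) * (n.factorial : ℝ)) = (((2*n).factorial) : ℝ) := by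
    have := Nat.choose_mul_factorial_mul_factorial (show n ≤ 2*n by omega)
    rw [show 2*n - n = n from by omega] at this
    rw [mul_assoc] at this
    exact_mod_cast congrArg (Nat.cast : ℕ → ℝ) this
  have hE : (0:ℝ) < Real.exp 1 := Real.exp_pos 1
  have hP : (0:ℝ) < ((n:ℝ)/Real.exp 1)^n := by positivity
  have hfacpos : (0:ℝ) < (n.factorial : ℝ) := by exact_mod_cast Nat.factorial_pos n
  have h4 : (0:ℝ) < (4:ℝ)^n := by positivity
  have hsq : (Stirling.stirlingSeq n)^2
      = ((n.factorial:ℝ))^2 / ((2*(n:ℝ)) * (((n:ℝ)/Real.exp 1)^n)^2) := by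
    rw [Stirling.stirlingSeq, div_pow, mul_pow, Real.sq_sqrt (by positivity)]
  have hsqrt4 : Real.sqrt (2 * ((2*n : ℕ):ℝ)) = 2 * s := by
    rw [show (2 * ((2*n : ℕ):ℝ)) = (2*s)^2 from by push_cast; rw [mul_pow]; nlinarith [hss]]
    exact Real.sqrt_sq (by positivity)
  have hpow : (((2*n : ℕ):ℝ)/Real.exp 1)^(2*n) = 4^n * (((n:ℝ)/Real.exp 1)^n)^2 := by
    push_cast
    rw [show (2*(n:ℝ))/Real.exp 1 = 2*((n:ℝ)/Real.exp 1) from by ring, mul_pow,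
      ← pow_mul, show (2:ℝ)^(2*n) = 4^n from by rw [pow_mul]; norm_num,
      show n*2 = 2*n from by ring, pow_mul]
  rw [Stirling.stirlingSeq, hsq, hsqrt4, hpow]
  rw [← hss, ← hfac]
  field_simp

lemma cb_tendsto :
    Tendsto (fun n : ℕ => Real.sqrt n * ((2*n).choose n : ℝ) / 4^n) atTop
      (nhds (1/Real.sqrt Real.pi)) := by
  have hπ : (0:ℝ) < Real.pi := Real.pi_pos
  have hdouble : Tendsto (fun n : ℕ => 2*n) atTop atTop :=
    tendsto_atTop_atTop.mpr fun b => ⟨b, fun a ha => by omega⟩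
  have h2 : Tendsto (fun n : ℕ => Stirling.stirlingSeq (2*n)) atTop (nhds (Real.sqrt Real.pi)) :=
    Stirling.tendsto_stirlingSeq_sqrt_pi.comp hdouble
  have h3 : Tendsto (fun n : ℕ => (Stirling.stirlingSeq n)^2) atTop (nhds Real.pi) := by
    have := Stirling.tendsto_stirlingSeq_sqrt_pi.pow 2
    rwa [Real.sq_sqrt hπ.le] at this
  have h4 : Tendsto (fun n : ℕ => Stirling.stirlingSeq (2*n) / (Stirling.stirlingSeq n)^2)
      atTop (nhds (Real.sqrt Real.pi / Real.pi)) := h2.div h3 hπ.ne'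
  have heq : Real.sqrt Real.pi / Real.pi = 1 / Real.sqrt Real.pi := by
    rw [div_eq_div_iff hπ.ne' (Real.sqrt_ne_zero'.mpr hπ), one_mul, Real.mul_self_sqrt hπ.le]
  rw [← heq]
  refine h4.congr' ?_
  filter_upwards [eventually_ge_atTop 1] with n hn
  exact (cb_eq n hn).symm

end EEAux

open EEAux

/-- In the symmetric case `α = 1/2`, the coefficients of the expected-end generating
function satisfy `[z^n]E ∼ 2√(n/π)`. -/
theorem expectedEnd_coeff_asymptotic_symmetric
    (α β : ℝ) (hα0 : 0 < α) (hα1 : α < 1) (hβ : β = 1 - α)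
    (f g : ℕ → PowerSeries ℝ) (fQ : PowerSeries ℝ)
    (hf : ∀ N : ℕ, f (N + 2) =
      C (α * β) * X * f (N + 1) + C (α * β) * X * f (N + 3)
        + C (α ^ 2 + β ^ 2) * X * f (N + 2))
    (hf1 : f 1 = C (α * β) * X * f 0 + C (α * β) * X * f 2
        + C (α ^ 2 + β ^ 2) * X * f 1 + C (β ^ 2) * X * fQ)
    (hf0 : f 0 = 1 + C (α * β) * X * f 1 + C (α ^ 2 + β ^ 2) * X * f 0
        + C (α * β) * X * fQ)
    (hfQ : fQ = C (α * β) * X * g 0 + C (α ^ 2) * X * fQ)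
    (hg : ∀ N : ℕ, g (N + 1) = C (α * β) * X * g N + C (α * β) * X * g (N + 2)
        + C (α ^ 2 + β ^ 2) * X * g (N + 1))
    (hg0 : g 0 = C (α * β) * X * f 0 + C (α * β) * X * g 1
        + C (α * β) * X * fQ + C (α ^ 2 + β ^ 2) * X * g 0)
    (hsupp : ∀ m N : ℕ, m < N → coeff m (f N) = 0 ∧ coeff m (g N) = 0) (hhalf : α = 1 / 2) :
    Tendsto (fun n : ℕ => coeff n (expectedEnd f g) / Real.sqrt n) atTop
      (nhds (2 / Real.sqrt Real.pi)) := by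
  subst hβ
  subst hhalf
  -- Step 1: identify all coefficients by induction.
  have key : ∀ m : ℕ, (coeff m (f 0) + coeff m fQ = qc m) ∧
      (∀ N, coeff m (g N) = pc m N) ∧ (∀ N, coeff m (f (N+1)) = pc m N) := by
    intro m
    induction m with
    | zero =>
      have hfQ0 : coeff 0 fQ = 0 := by
        rw [hfQ]; simp [coeff_zero_CXmul]
      refine ⟨?_, ?_, ?_⟩
      · rw [hf0, hfQ0]
        simp [coeff_zero_CXmul, qc]
      · intro N
        cases N with
        | zero =>
          rw [hg0, pc_zero]
          simp [coeff_zero_CXmul]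
        | succ k =>
          rw [(hsupp 0 (k+1) (by omega)).2, pc_zero]
      · intro N
        rw [(hsupp 0 (N+1) (by omega)).1, pc_zero]
    | succ m ih =>
      obtain ⟨ihS, ihg, ihf⟩ := ih
      have hf1' : coeff m (f 1) = pc m 0 := ihf 0
      have hf2' : coeff m (f 2) = pc m 1 := ihf 1
      have hgm : ∀ N, coeff (m+1) (g N) = pc (m+1) N := by
        intro N
        cases N with
        | zero =>
          rw [hg0]
          simp only [LinearMap.map_add, coeff_CXmul]
          rw [ihg 1, ihg 0, pc_succ_zero]
          linear_combination (1/4 : ℝ) * ihS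
        | succ k =>
          rw [hg k]
          simp only [LinearMap.map_add, coeff_CXmul]
          rw [ihg k, ihg (k+1), ihg (k+2), pc_succ_succ]
          ring
      have hfm : ∀ N, coeff (m+1) (f (N+1)) = pc (m+1) N := by
        intro N
        cases N with
        | zero =>
          rw [hf1]
          simp only [LinearMap.map_add, coeff_CXmul]
          rw [hf1', hf2', pc_succ_zero]
          linear_combination (1/4 : ℝ) * ihS
        | succ k =>
          show coeff (m+1) (f (k+2)) = pc (m+1) (k+1)
          rw [hf k]
          simp only [LinearMap.map_add, coeff_CXmul]
          have e1 : coeff m (f (k+1)) = pc m k := ihf k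
          have e2 : coeff m (f (k+3)) = pc m (k+2) := ihf (k+2)
          have e3 : coeff m (f (k+2)) = pc m (k+1) := ihf (k+1)
          rw [e1, e2, e3, pc_succ_succ]
          ring
      have hSm : coeff (m+1) (f 0) + coeff (m+1) fQ = qc (m+1) := by
        rw [hfQ, hf0]
        simp only [LinearMap.map_add, coeff_CXmul, PowerSeries.coeff_one]
        rw [if_neg (Nat.succ_ne_zero m)]
        rw [ihg 0, hf1', qc_succ]
        linear_combination (1/2 : ℝ) * ihS
      exact ⟨hSm, hgm, hfm⟩
  -- Step 2: coefficient of the expected-end series.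
  have hcoeff : ∀ n : ℕ, coeff n (expectedEnd f g)
      = ((2*(n:ℝ) + 1/2) * ((2*n).choose n : ℝ) - 4^n/2)/4^n := by
    intro n
    rw [expectedEnd, coeff_mk]
    rw [tsum_eq_sum (s := Finset.range (n+1))
      (by
        intro k hk
        have hk' : n < k := by
          have := Finset.mem_range.not.mp hk
          omega
        rw [(hsupp n k hk').1, (hsupp n k hk').2]
        ring)]
    rw [Finset.sum_add_distrib]
    have hfpart : ∑ k ∈ Finset.range (n+1), (2*(k:ℝ)) * coeff n (f k)
        = ∑ i ∈ Finset.range n, (2*((i:ℝ)+1)) * pc n i := by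
      rw [Finset.sum_range_succ' (fun k => (2*(k:ℝ)) * coeff n (f k)) n]
      simp only [Nat.cast_zero, mul_zero, zero_mul, add_zero, Nat.cast_add, Nat.cast_one]
      exact Finset.sum_congr rfl fun i _ => by rw [(key n).2.2 i]
    have hgpart : ∑ k ∈ Finset.range (n+1), (2*(k:ℝ)+1) * coeff n (g k)
        = ∑ i ∈ Finset.range n, (2*(i:ℝ)+1) * pc n i := by
      rw [Finset.sum_range_succ (fun k => (2*(k:ℝ)+1) * coeff n (g k)) n]
      rw [(key n).2.1 n, pc_diag, mul_zero, add_zero]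
      exact Finset.sum_congr rfl fun i _ => by rw [(key n).2.1 i]
    rw [hfpart, hgpart, ← Finset.sum_add_distrib]
    have hcomb : ∑ i ∈ Finset.range n, ((2*((i:ℝ)+1)) * pc n i + (2*(i:ℝ)+1) * pc n i)
        = (∑ i ∈ Finset.range n, (4*(i:ℝ)+3) * ((2*n).choose (n+i+1) : ℝ))/4^n := by
      rw [Finset.sum_div]
      refine Finset.sum_congr rfl fun i _ => ?_
      simp only [pc]
      ring
    rw [hcomb, sumId n]
  -- Step 3: the limit.
  have hπ : (0:ℝ) < Real.pi := Real.pi_pos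
  have ht1 : Tendsto (fun n : ℕ => (2*(n:ℝ)+1/2)/(n:ℝ)) atTop (nhds 2) := by
    have h0 : Tendsto (fun n : ℕ => 2 + (1/2) * (1/(n:ℝ))) atTop (nhds (2 + (1/2)*0)) :=
      tendsto_const_nhds.add (tendsto_one_div_atTop_nhds_zero_nat.const_mul (1/2))
    rw [show (2:ℝ) + (1/2)*0 = 2 from by ring] at h0
    refine h0.congr' ?_
    filter_upwards [eventually_ge_atTop 1] with n hn
    have hn0 : (n:ℝ) ≠ 0 := by
      have : (1:ℝ) ≤ n := by exact_mod_cast hn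
      linarith
    field_simp
  have ht3 : Tendsto (fun n : ℕ => 1/Real.sqrt n) atTop (nhds 0) := by
    have h0 : Tendsto (fun n : ℕ => Real.sqrt (1/(n:ℝ))) atTop (nhds (Real.sqrt 0)) :=
      tendsto_one_div_atTop_nhds_zero_nat.sqrt
    rw [Real.sqrt_zero] at h0
    refine h0.congr (fun n => ?_)
    rw [one_div, one_div, Real.sqrt_inv]
  have hmain : Tendsto (fun n : ℕ =>
      ((2*(n:ℝ)+1/2)/(n:ℝ)) * (Real.sqrt n * ((2*n).choose n : ℝ)/4^n) - 1/2 * (1/Real.sqrt n))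
      atTop (nhds (2 * (1/Real.sqrt Real.pi) - 1/2 * 0)) :=
    (ht1.mul cb_tendsto).sub (ht3.const_mul (1/2))
  rw [show (2:ℝ) * (1/Real.sqrt Real.pi) - 1/2*0 = 2/Real.sqrt Real.pi from by ring] at hmain
  refine hmain.congr' ?_
  filter_upwards [eventually_ge_atTop 1] with n hn
  rw [hcoeff n]
  have hnp : (0:ℝ) < n := by exact_mod_cast hn
  set s : ℝ := Real.sqrt n with hsdef
  have hs0 : s ≠ 0 := ne_of_gt (Real.sqrt_pos.mpr hnp)
  have hss : s * s = (n:ℝ) := Real.mul_self_sqrt hnp.le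
  have h4 : (4:ℝ)^n ≠ 0 := by positivity
  rw [← hss]
  field_simp
end
end

section
/- For each real z with 0 < z < 1 there is a unique real v = φ(z) with 0 < v < 1 satisfying v = z·(α+βv)·(β+αv), and lim_{z→1⁻} (1 − φ(z))/√(1−z) = 1/√(αβ). -/
open PowerSeries Filter

noncomputable section

private lemma uniq_aux (α z v w : ℝ) (hα0 : 0 < α) (hα1 : α < 1) (hz0 : 0 < z)
    (hv0 : 0 < v) (hv1 : v < 1) (hw0 : 0 < w) (hw1 : w < 1)
    (hv : v = z * (α + (1 - α) * v) * ((1 - α) + α * v))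
    (hw : w = z * (α + (1 - α) * w) * ((1 - α) + α * w)) : v = w := by
  have hs : 0 < α * (1 - α) := by nlinarith
  have key : (α * (1 - α) * z) * ((v - w) * (v * w - 1)) = 0 := by
    linear_combination v * hw - w * hv
  have h2 : (v - w) * (v * w - 1) = 0 := by
    rcases mul_eq_zero.mp key with h | h
    · exact absurd h (by positivity)
    · exact h
  rcases mul_eq_zero.mp h2 with h | h
  · linarith
  · nlinarith

private lemma quad_root (α z v d : ℝ)
    (hd2 : d ^ 2 = (1 - z) * (1 - z + 4 * z * (α * (1 - α))))
    (e : 2 * z * (α * (1 - α)) * v = 1 - z + 2 * z * (α * (1 - α)) - d)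
    (hzt : 0 < z * (α * (1 - α))) :
    v = z * (α + (1 - α) * v) * ((1 - α) + α * v) := by
  have h4 : (4 * (z * (α * (1 - α)))) * (v - z * (α + (1 - α) * v) * ((1 - α) + α * v)) = 0 := by
    linear_combination ((1 - z + 2 * z * (α * (1 - α))) - 2 * z * (α * (1 - α)) * v + d) * e
      - hd2
  rcases mul_eq_zero.mp h4 with h | h
  · exact absurd h (by positivity)
  · linarith

private noncomputable def phiF (α z : ℝ) : ℝ :=
  (1 - z + 2 * z * (α * (1 - α)) - Real.sqrt ((1 - z) * (1 - z + 4 * z * (α * (1 - α)))))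
    / (2 * z * (α * (1 - α)))

private lemma phiF_spec (α z : ℝ) (hα0 : 0 < α) (hα1 : α < 1) (hz0 : 0 < z) (hz1 : z < 1) :
    0 < phiF α z ∧ phiF α z < 1 ∧
      phiF α z = z * (α + (1 - α) * phiF α z) * ((1 - α) + α * phiF α z) := by
  have ht : 0 < α * (1 - α) := by nlinarith
  have hz1' : 0 < 1 - z := by linarith
  have hzt : 0 < z * (α * (1 - α)) := mul_pos hz0 ht
  have hA : 0 < 1 - z + 4 * z * (α * (1 - α)) := by nlinarith
  have hnn : 0 ≤ (1 - z) * (1 - z + 4 * z * (α * (1 - α))) := le_of_lt (mul_pos hz1' hA)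
  have hd0 : 0 ≤ Real.sqrt ((1 - z) * (1 - z + 4 * z * (α * (1 - α)))) := Real.sqrt_nonneg _
  have hd2 : Real.sqrt ((1 - z) * (1 - z + 4 * z * (α * (1 - α)))) ^ 2
      = (1 - z) * (1 - z + 4 * z * (α * (1 - α))) := Real.sq_sqrt hnn
  have hb : 0 < 1 - z + 2 * z * (α * (1 - α)) := by nlinarith
  have hzt2 : 0 < (z * (α * (1 - α))) ^ 2 := by positivity
  have hdb : Real.sqrt ((1 - z) * (1 - z + 4 * z * (α * (1 - α))))
      < 1 - z + 2 * z * (α * (1 - α)) :=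
    lt_of_pow_lt_pow_left₀ 2 hb.le (by nlinarith)
  have hdz : 1 - z < Real.sqrt ((1 - z) * (1 - z + 4 * z * (α * (1 - α)))) :=
    lt_of_pow_lt_pow_left₀ 2 hd0 (by nlinarith)
  have hden : (0 : ℝ) < 2 * z * (α * (1 - α)) := by positivity
  have e : 2 * z * (α * (1 - α)) * phiF α z
      = 1 - z + 2 * z * (α * (1 - α))
        - Real.sqrt ((1 - z) * (1 - z + 4 * z * (α * (1 - α)))) := by
    have h1α : (1:ℝ) - α ≠ 0 := by linarith
    simp only [phiF]
    field_simp
  refine ⟨?_, ?_, quad_root α z _ _ hd2 e hzt⟩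
  · exact div_pos (by linarith) hden
  · rw [phiF, div_lt_one hden]; linarith

/-- For each `0 < z < 1` there is a unique `0 < v < 1` with `v = z(α+βv)(β+αv)`, and the
function `φ` so defined satisfies `(1-φ(z))/√(1-z) → 1/√(αβ)` as `z → 1⁻`. -/
theorem unique_fixed_point_and_limit (α β : ℝ) (hα0 : 0 < α) (hα1 : α < 1)
    (hβ : β = 1 - α) :
    (∀ z : ℝ, 0 < z → z < 1 →
      ∃! v : ℝ, 0 < v ∧ v < 1 ∧ v = z * (α + β * v) * (β + α * v)) ∧
    (∀ φ : ℝ → ℝ,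
      (∀ z : ℝ, 0 < z → z < 1 →
        0 < φ z ∧ φ z < 1 ∧ φ z = z * (α + β * φ z) * (β + α * φ z)) →
      Tendsto (fun z : ℝ => (1 - φ z) / Real.sqrt (1 - z))
        (nhdsWithin 1 (Set.Ioo 0 1)) (nhds (1 / Real.sqrt (α * β)))) := by
  subst hβ
  have ht : 0 < α * (1 - α) := by nlinarith
  constructor
  · intro z hz0 hz1
    obtain ⟨h1, h2, h3⟩ := phiF_spec α z hα0 hα1 hz0 hz1
    exact ⟨phiF α z, ⟨h1, h2, h3⟩, fun w ⟨hw0, hw1, hw⟩ =>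
      uniq_aux α z w (phiF α z) hα0 hα1 hz0 hw0 hw1 h1 h2 hw h3⟩
  · intro φ H
    have hEq : ∀ z ∈ Set.Ioo (0:ℝ) 1,
        (1 - φ z) / Real.sqrt (1 - z)
          = (Real.sqrt (1 - z + 4 * z * (α * (1 - α))) - Real.sqrt (1 - z))
              / (2 * z * (α * (1 - α))) := by
      rintro z ⟨hz0, hz1⟩
      obtain ⟨h1, h2, h3⟩ := H z hz0 hz1
      obtain ⟨p1, p2, p3⟩ := phiF_spec α z hα0 hα1 hz0 hz1
      have hφ : φ z = phiF α z :=
        uniq_aux α z (φ z) (phiF α z) hα0 hα1 hz0 h1 h2 p1 p2 h3 p3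
      have hnn1 : (0:ℝ) ≤ 1 - z := by linarith
      have hmul : Real.sqrt ((1 - z) * (1 - z + 4 * z * (α * (1 - α))))
          = Real.sqrt (1 - z) * Real.sqrt (1 - z + 4 * z * (α * (1 - α))) :=
        Real.sqrt_mul hnn1 _
      have hq : Real.sqrt (1 - z) ^ 2 = 1 - z := Real.sq_sqrt hnn1
      have hqpos : 0 < Real.sqrt (1 - z) := Real.sqrt_pos.mpr (by linarith)
      have hden : (0:ℝ) < 2 * z * (α * (1 - α)) := by positivity
      have h1v : 1 - phiF α z
          = Real.sqrt (1 - z) * (Real.sqrt (1 - z + 4 * z * (α * (1 - α))) - Real.sqrt (1 - z))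
            / (2 * z * (α * (1 - α))) := by
        rw [phiF, hmul]
        rw [eq_div_iff hden.ne', sub_mul, div_mul_cancel₀ _ hden.ne']
        linear_combination hq
      rw [hφ, h1v, div_div,
        mul_comm (Real.sqrt (1 - z)) (Real.sqrt (1 - z + 4 * z * (α * (1 - α))) - Real.sqrt (1 - z)),
        mul_div_mul_right _ _ hqpos.ne']
    have hmem : Set.Ioo (0:ℝ) 1 ∈ nhdsWithin (1:ℝ) (Set.Ioo 0 1) := self_mem_nhdsWithin
    apply Tendsto.congr' (Filter.eventuallyEq_of_mem hmem fun z hz => (hEq z hz).symm)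
    have hg1 : (Real.sqrt (1 - 1 + 4 * 1 * (α * (1 - α))) - Real.sqrt (1 - 1))
        / (2 * 1 * (α * (1 - α))) = 1 / Real.sqrt (α * (1 - α)) := by
      have h4 : Real.sqrt (1 - 1 + 4 * 1 * (α * (1 - α))) = 2 * Real.sqrt (α * (1 - α)) := by
        rw [show (1:ℝ) - 1 + 4 * 1 * (α * (1 - α)) = 2 ^ 2 * (α * (1 - α)) by ring,
          Real.sqrt_mul (by positivity), Real.sqrt_sq (by norm_num)]
      have hss : Real.sqrt (α * (1 - α)) * Real.sqrt (α * (1 - α)) = α * (1 - α) :=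
        Real.mul_self_sqrt ht.le
      have hsp : 0 < Real.sqrt (α * (1 - α)) := Real.sqrt_pos.mpr ht
      rw [h4, show (1:ℝ) - 1 = 0 by ring, Real.sqrt_zero]
      rw [div_eq_div_iff (by positivity) hsp.ne']
      linear_combination 2 * hss
    rw [← hg1]
    apply tendsto_nhdsWithin_of_tendsto_nhds
    apply ContinuousAt.tendsto
    apply ContinuousAt.div
    · exact Continuous.continuousAt (by fun_prop)
    · exact Continuous.continuousAt (by fun_prop)
    · positivity

end
end

section
/- There exists exactly one family of formal power series f_i, g_i (i ≥ 0), P and Q in ℝ[[z]] satisfying the one-step Knödel–Böhm–Hornik system together with the support condition. -/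
open PowerSeries Filter

noncomputable section

namespace KBH

/-- one step of the coefficient recursion: given the coefficient sequences at
levels `n-1` (`p`) and `n-2` (`q`), produce level `n`. -/
def stepF (α β : ℝ) (p q : (ℕ → ℝ) × (ℕ → ℝ)) : (ℕ → ℝ) × (ℕ → ℝ) :=
  (fun i =>
    if i = 0 then β ^ 2 * q.1 0 + α * p.1 1
    else if i = 1 then α * p.1 0 + β * p.1 2 + α * β * q.2 0
    else if i % 2 = 0 then β * p.1 (i - 1) + α * p.1 (i + 1)
    else α * p.1 (i - 1) + β * p.1 (i + 1),
   fun i =>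
    if i = 0 then α ^ 2 * q.2 0 + β * p.2 1
    else if i = 1 then β * p.2 0 + α * p.2 2 + α * β * q.1 0
    else if i % 2 = 0 then α * p.2 (i - 1) + β * p.2 (i + 1)
    else β * p.2 (i - 1) + α * p.2 (i + 1))

/-- `(D α β n).1` is the pair of coefficient sequences at level `n`;
`(D α β n).2` is the pair at level `n-1` (zero for `n = 0`). -/
def D (α β : ℝ) : ℕ → ((ℕ → ℝ) × (ℕ → ℝ)) × ((ℕ → ℝ) × (ℕ → ℝ))
  | 0 => ((fun i => if i = 0 then 1 else 0, fun _ => 0), (fun _ => 0, fun _ => 0))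
  | n + 1 => (stepF α β (D α β n).1 (D α β n).2, (D α β n).1)

def A (α β : ℝ) (n i : ℕ) : ℝ := ((D α β n).1).1 i
def B (α β : ℝ) (n i : ℕ) : ℝ := ((D α β n).1).2 i
/-- previous level -/
def A' (α β : ℝ) (n i : ℕ) : ℝ := ((D α β n).2).1 i
def B' (α β : ℝ) (n i : ℕ) : ℝ := ((D α β n).2).2 i

variable (α β : ℝ)

lemma A_zero (i : ℕ) : A α β 0 i = if i = 0 then 1 else 0 := rfl
lemma B_zero (i : ℕ) : B α β 0 i = 0 := rfl
lemma A'_zero (i : ℕ) : A' α β 0 i = 0 := rfl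
lemma B'_zero (i : ℕ) : B' α β 0 i = 0 := rfl
lemma A'_succ (n i : ℕ) : A' α β (n + 1) i = A α β n i := rfl
lemma B'_succ (n i : ℕ) : B' α β (n + 1) i = B α β n i := rfl

lemma A_succ_zero (n : ℕ) :
    A α β (n + 1) 0 = β ^ 2 * A' α β n 0 + α * A α β n 1 := rfl

lemma A_succ_one (n : ℕ) :
    A α β (n + 1) 1 = α * A α β n 0 + β * A α β n 2 + α * β * B' α β n 0 := rfl

lemma A_succ_even (n k : ℕ) :
    A α β (n + 1) (2 * k + 2) = β * A α β n (2 * k + 1) + α * A α β n (2 * k + 3) := by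
  simp only [A, D]
  have h0 : ¬ (2 * k + 2 = 0) := by omega
  have h1 : ¬ (2 * k + 2 = 1) := by omega
  have h2 : (2 * k + 2) % 2 = 0 := by omega
  have h3 : 2 * k + 2 - 1 = 2 * k + 1 := by omega
  simp only [stepF, h0, h1, h2, h3, if_false, if_true]

lemma A_succ_odd (n k : ℕ) :
    A α β (n + 1) (2 * k + 3) = α * A α β n (2 * k + 2) + β * A α β n (2 * k + 4) := by
  simp only [A, D]
  have h0 : ¬ (2 * k + 3 = 0) := by omega
  have h1 : ¬ (2 * k + 3 = 1) := by omega
  have h2 : ¬ ((2 * k + 3) % 2 = 0) := by omega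
  have h3 : 2 * k + 3 - 1 = 2 * k + 2 := by omega
  simp only [stepF, h0, h1, h2, h3, if_false]

lemma B_succ_zero (n : ℕ) :
    B α β (n + 1) 0 = α ^ 2 * B' α β n 0 + β * B α β n 1 := rfl

lemma B_succ_one (n : ℕ) :
    B α β (n + 1) 1 = β * B α β n 0 + α * B α β n 2 + α * β * A' α β n 0 := rfl

lemma B_succ_even (n k : ℕ) :
    B α β (n + 1) (2 * k + 2) = α * B α β n (2 * k + 1) + β * B α β n (2 * k + 3) := by
  simp only [B, D]
  have h0 : ¬ (2 * k + 2 = 0) := by omega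
  have h1 : ¬ (2 * k + 2 = 1) := by omega
  have h2 : (2 * k + 2) % 2 = 0 := by omega
  have h3 : 2 * k + 2 - 1 = 2 * k + 1 := by omega
  simp only [stepF, h0, h1, h2, h3, if_false, if_true]

lemma B_succ_odd (n k : ℕ) :
    B α β (n + 1) (2 * k + 3) = β * B α β n (2 * k + 2) + α * B α β n (2 * k + 4) := by
  simp only [B, D]
  have h0 : ¬ (2 * k + 3 = 0) := by omega
  have h1 : ¬ (2 * k + 3 = 1) := by omega
  have h2 : ¬ ((2 * k + 3) % 2 = 0) := by omega
  have h3 : 2 * k + 3 - 1 = 2 * k + 2 := by omega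
  simp only [stepF, h0, h1, h2, h3, if_false]

lemma supp : ∀ n i, n < i → A α β n i = 0 ∧ B α β n i = 0 := by
  intro n
  induction n with
  | zero =>
    intro i hi
    constructor
    · rw [A_zero, if_neg (by omega)]
    · rw [B_zero]
  | succ n ih =>
    intro i hi
    obtain ⟨j, rfl⟩ : ∃ j, i = j + 2 := ⟨i - 2, by omega⟩
    rcases Nat.even_or_odd j with ⟨k, hk⟩ | ⟨k, hk⟩
    · have : j + 2 = 2 * k + 2 := by omega
      rw [this]
      rw [A_succ_even, B_succ_even,
        (ih _ (by omega)).1, (ih _ (by omega)).1,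
        (ih _ (by omega)).2, (ih _ (by omega)).2]
      simp
    · have : j + 2 = 2 * k + 3 := by omega
      rw [this]
      rw [A_succ_odd, B_succ_odd,
        (ih _ (by omega)).1, (ih _ (by omega)).1,
        (ih _ (by omega)).2, (ih _ (by omega)).2]
      simp

/- coefficient lemmas -/
lemma coeff_CX_zero (c : ℝ) (f : PowerSeries ℝ) :
    coeff 0 (C c * X * f) = 0 := by
  rw [mul_assoc, coeff_C_mul, coeff_zero_X_mul, mul_zero]

lemma coeff_CX_succ (c : ℝ) (f : PowerSeries ℝ) (n : ℕ) :
    coeff (n + 1) (C c * X * f) = c * coeff n f := by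
  rw [mul_assoc, coeff_C_mul, coeff_succ_X_mul]

lemma CX2_eq (c : ℝ) (f : PowerSeries ℝ) :
    C c * X ^ 2 * f = C c * X * (X * f) := by ring

lemma coeff_CX2_zero (c : ℝ) (f : PowerSeries ℝ) :
    coeff 0 (C c * X ^ 2 * f) = 0 := by
  rw [CX2_eq, coeff_CX_zero]

lemma coeff_CX2_one (c : ℝ) (f : PowerSeries ℝ) :
    coeff 1 (C c * X ^ 2 * f) = 0 := by
  rw [CX2_eq, coeff_CX_succ, coeff_zero_X_mul, mul_zero]

lemma coeff_CX2_succ (c : ℝ) (f : PowerSeries ℝ) (n : ℕ) :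
    coeff (n + 2) (C c * X ^ 2 * f) = c * coeff n f := by
  rw [CX2_eq, coeff_CX_succ, coeff_succ_X_mul]


def f (α β : ℝ) (i : ℕ) : PowerSeries ℝ := PowerSeries.mk fun n => A α β n i
def g (α β : ℝ) (i : ℕ) : PowerSeries ℝ := PowerSeries.mk fun n => B α β n i

lemma f_even (k : ℕ) :
    f α β (2 * k + 2) = C β * X * f α β (2 * k + 1) + C α * X * f α β (2 * k + 3) := by
  ext n
  cases n with
  | zero =>
    rw [map_add, coeff_CX_zero, coeff_CX_zero, f, coeff_mk, A_zero, if_neg (by omega)]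
    simp
  | succ n =>
    rw [map_add, coeff_CX_succ, coeff_CX_succ, f, f, f, coeff_mk, coeff_mk, coeff_mk,
      A_succ_even]

lemma f_odd (k : ℕ) :
    f α β (2 * k + 3) = C α * X * f α β (2 * k + 2) + C β * X * f α β (2 * k + 4) := by
  ext n
  cases n with
  | zero =>
    rw [map_add, coeff_CX_zero, coeff_CX_zero, f, coeff_mk, A_zero, if_neg (by omega)]
    simp
  | succ n =>
    rw [map_add, coeff_CX_succ, coeff_CX_succ, f, f, f, coeff_mk, coeff_mk, coeff_mk,
      A_succ_odd]

lemma f_one :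
    f α β 1 = C α * X * f α β 0 + C β * X * f α β 2 + C (α * β) * X ^ 2 * g α β 0 := by
  ext n
  match n with
  | 0 =>
    rw [map_add, map_add, coeff_CX_zero, coeff_CX_zero, coeff_CX2_zero, f, coeff_mk, A_zero]
    simp
  | 1 =>
    rw [map_add, map_add, coeff_CX_succ, coeff_CX_succ, coeff_CX2_one, f, f, f, coeff_mk,
      coeff_mk, coeff_mk, A_succ_one, B'_zero]
    ring
  | (n + 2) =>
    rw [map_add, map_add, coeff_CX_succ, coeff_CX_succ, coeff_CX2_succ, f, f, f, g,
      coeff_mk, coeff_mk, coeff_mk, coeff_mk, A_succ_one, B'_succ]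

lemma f_zero_eq :
    f α β 0 = 1 + C (β ^ 2) * X ^ 2 * f α β 0 + C α * X * f α β 1 := by
  ext n
  match n with
  | 0 =>
    rw [map_add, map_add, coeff_CX_zero, coeff_CX2_zero, f, coeff_mk, A_zero]
    simp
  | 1 =>
    rw [map_add, map_add, coeff_CX_succ, coeff_CX2_one, f, f, coeff_mk, coeff_mk,
      A_succ_zero, A'_zero]
    simp [coeff_one]
  | (n + 2) =>
    rw [map_add, map_add, coeff_CX_succ, coeff_CX2_succ, f, f, coeff_mk, coeff_mk,
      coeff_mk, A_succ_zero, A'_succ]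
    simp [coeff_one]

lemma g_even (k : ℕ) :
    g α β (2 * k + 2) = C α * X * g α β (2 * k + 1) + C β * X * g α β (2 * k + 3) := by
  ext n
  cases n with
  | zero =>
    rw [map_add, coeff_CX_zero, coeff_CX_zero, g, coeff_mk, B_zero]
    simp
  | succ n =>
    rw [map_add, coeff_CX_succ, coeff_CX_succ, g, g, g, coeff_mk, coeff_mk, coeff_mk,
      B_succ_even]

lemma g_odd (k : ℕ) :
    g α β (2 * k + 3) = C β * X * g α β (2 * k + 2) + C α * X * g α β (2 * k + 4) := by
  ext n
  cases n with
  | zero =>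
    rw [map_add, coeff_CX_zero, coeff_CX_zero, g, coeff_mk, B_zero]
    simp
  | succ n =>
    rw [map_add, coeff_CX_succ, coeff_CX_succ, g, g, g, coeff_mk, coeff_mk, coeff_mk,
      B_succ_odd]

lemma g_one :
    g α β 1 = C β * X * g α β 0 + C α * X * g α β 2 + C (α * β) * X ^ 2 * f α β 0 := by
  ext n
  match n with
  | 0 =>
    rw [map_add, map_add, coeff_CX_zero, coeff_CX_zero, coeff_CX2_zero, g, coeff_mk, B_zero]
    simp
  | 1 =>
    rw [map_add, map_add, coeff_CX_succ, coeff_CX_succ, coeff_CX2_one, g, g, g, coeff_mk,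
      coeff_mk, coeff_mk, B_succ_one, A'_zero]
    ring
  | (n + 2) =>
    rw [map_add, map_add, coeff_CX_succ, coeff_CX_succ, coeff_CX2_succ, g, g, g, f,
      coeff_mk, coeff_mk, coeff_mk, coeff_mk, B_succ_one, A'_succ]

lemma g_zero_eq :
    g α β 0 = C (α ^ 2) * X ^ 2 * g α β 0 + C β * X * g α β 1 := by
  ext n
  match n with
  | 0 =>
    rw [map_add, coeff_CX_zero, coeff_CX2_zero, g, coeff_mk, B_zero]
    simp
  | 1 =>
    rw [map_add, coeff_CX_succ, coeff_CX2_one, g, g, coeff_mk, coeff_mk,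
      B_succ_zero, B'_zero]
    simp
  | (n + 2) =>
    rw [map_add, coeff_CX_succ, coeff_CX2_succ, g, g, coeff_mk, coeff_mk,
      coeff_mk, B_succ_zero, B'_succ]

end KBH

open KBH in
/-- Existence and uniqueness of the solution of the one-step Knödel–Böhm–Hornik system
together with the support condition. -/
theorem oneStep_system_existsUnique (α β : ℝ) (hα0 : 0 < α) (hα1 : α < 1)
    (hβ : β = 1 - α) :
    ∃! p : (ℕ → PowerSeries ℝ) × (ℕ → PowerSeries ℝ) × PowerSeries ℝ × PowerSeries ℝ,
      (∀ k : ℕ, p.1 (2 * k + 2) = C β * X * p.1 (2 * k + 1) + C α * X * p.1 (2 * k + 3)) ∧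
      (∀ k : ℕ, p.1 (2 * k + 3) = C α * X * p.1 (2 * k + 2) + C β * X * p.1 (2 * k + 4)) ∧
      (p.1 1 = C α * X * p.1 0 + C β * X * p.1 2 + C (α * β) * X ^ 2 * p.2.1 0) ∧
      (p.1 0 = 1 + C (β ^ 2) * X ^ 2 * p.1 0 + C α * X * p.1 1) ∧
      (p.2.2.1 = C β * X * p.1 0) ∧
      (∀ k : ℕ, p.2.1 (2 * k + 2) =
        C α * X * p.2.1 (2 * k + 1) + C β * X * p.2.1 (2 * k + 3)) ∧
      (∀ k : ℕ, p.2.1 (2 * k + 3) =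
        C β * X * p.2.1 (2 * k + 2) + C α * X * p.2.1 (2 * k + 4)) ∧
      (p.2.1 1 = C β * X * p.2.1 0 + C α * X * p.2.1 2 + C (α * β) * X ^ 2 * p.1 0) ∧
      (p.2.1 0 = C (α ^ 2) * X ^ 2 * p.2.1 0 + C β * X * p.2.1 1) ∧
      (p.2.2.2 = C α * X * p.2.1 0) ∧
      (∀ n i : ℕ, n < i → coeff n (p.1 i) = 0 ∧ coeff n (p.2.1 i) = 0) := by
  refine ⟨⟨f α β, g α β, C β * X * f α β 0, C α * X * g α β 0⟩,
    ⟨f_even α β, f_odd α β, f_one α β, f_zero_eq α β, rfl,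
     g_even α β, g_odd α β, g_one α β, g_zero_eq α β, rfl, ?_⟩, ?_⟩
  · intro n i hi
    have h := supp α β n i hi
    constructor
    · show coeff n (f α β i) = 0
      rw [f, coeff_mk, h.1]
    · show coeff n (g α β i) = 0
      rw [g, coeff_mk, h.2]
  · rintro ⟨qf, qg, qP, qQ⟩ ⟨h1, h2, h3, h4, h5, h6, h7, h8, h9, h10, h11⟩
    dsimp only at h1 h2 h3 h4 h5 h6 h7 h8 h9 h10 h11
    have key : ∀ n i, coeff n (qf i) = A α β n i ∧ coeff n (qg i) = B α β n i := by
      intro n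
      induction n using Nat.strong_induction_on with
      | _ n ih =>
        intro i
        rcases i with _ | _ | j
        · constructor
          · rw [h4]
            rcases n with _ | _ | m
            · rw [map_add, map_add, coeff_CX_zero, coeff_CX2_zero, A_zero]
              simp
            · rw [map_add, map_add, coeff_CX_succ, coeff_CX2_one,
                (ih 0 (by omega) 1).1, A_succ_zero, A'_zero]
              simp [coeff_one]
            · rw [map_add, map_add, coeff_CX_succ, coeff_CX2_succ,
                (ih m (by omega) 0).1, (ih (m + 1) (by omega) 1).1,
                A_succ_zero, A'_succ]
              simp [coeff_one]
          · rw [h9]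
            rcases n with _ | _ | m
            · rw [map_add, coeff_CX_zero, coeff_CX2_zero, B_zero]
              simp
            · rw [map_add, coeff_CX_succ, coeff_CX2_one,
                (ih 0 (by omega) 1).2, B_succ_zero, B'_zero]
              simp
            · rw [map_add, coeff_CX_succ, coeff_CX2_succ,
                (ih m (by omega) 0).2, (ih (m + 1) (by omega) 1).2,
                B_succ_zero, B'_succ]
        · constructor
          · rw [h3]
            rcases n with _ | _ | m
            · rw [map_add, map_add, coeff_CX_zero, coeff_CX_zero, coeff_CX2_zero, A_zero]
              simp
            · rw [map_add, map_add, coeff_CX_succ, coeff_CX_succ, coeff_CX2_one,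
                (ih 0 (by omega) 0).1, (ih 0 (by omega) 2).1, A_succ_one, A_zero, B'_zero]
              simp
            · rw [map_add, map_add, coeff_CX_succ, coeff_CX_succ, coeff_CX2_succ,
                (ih (m + 1) (by omega) 0).1, (ih (m + 1) (by omega) 2).1,
                (ih m (by omega) 0).2, A_succ_one, B'_succ]
          · rw [h8]
            rcases n with _ | _ | m
            · rw [map_add, map_add, coeff_CX_zero, coeff_CX_zero, coeff_CX2_zero, B_zero]
              simp
            · rw [map_add, map_add, coeff_CX_succ, coeff_CX_succ, coeff_CX2_one,
                (ih 0 (by omega) 0).2, (ih 0 (by omega) 2).2, B_succ_one, B_zero, A'_zero]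
              simp
            · rw [map_add, map_add, coeff_CX_succ, coeff_CX_succ, coeff_CX2_succ,
                (ih (m + 1) (by omega) 0).2, (ih (m + 1) (by omega) 2).2,
                (ih m (by omega) 0).1, B_succ_one, A'_succ]
        · rcases Nat.even_or_odd j with ⟨k, hk⟩ | ⟨k, hk⟩
          · have hj : j + 1 + 1 = 2 * k + 2 := by omega
            rw [hj]
            constructor
            · rw [h1 k]
              rcases n with _ | m
              · rw [map_add, coeff_CX_zero, coeff_CX_zero, A_zero, if_neg (by omega)]
                simp
              · rw [map_add, coeff_CX_succ, coeff_CX_succ,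
                  (ih m (by omega) (2 * k + 1)).1, (ih m (by omega) (2 * k + 3)).1,
                  A_succ_even]
            · rw [h6 k]
              rcases n with _ | m
              · rw [map_add, coeff_CX_zero, coeff_CX_zero, B_zero]
                simp
              · rw [map_add, coeff_CX_succ, coeff_CX_succ,
                  (ih m (by omega) (2 * k + 1)).2, (ih m (by omega) (2 * k + 3)).2,
                  B_succ_even]
          · have hj : j + 1 + 1 = 2 * k + 3 := by omega
            rw [hj]
            constructor
            · rw [h2 k]
              rcases n with _ | m
              · rw [map_add, coeff_CX_zero, coeff_CX_zero, A_zero, if_neg (by omega)]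
                simp
              · rw [map_add, coeff_CX_succ, coeff_CX_succ,
                  (ih m (by omega) (2 * k + 2)).1, (ih m (by omega) (2 * k + 4)).1,
                  A_succ_odd]
            · rw [h7 k]
              rcases n with _ | m
              · rw [map_add, coeff_CX_zero, coeff_CX_zero, B_zero]
                simp
              · rw [map_add, coeff_CX_succ, coeff_CX_succ,
                  (ih m (by omega) (2 * k + 2)).2, (ih m (by omega) (2 * k + 4)).2,
                  B_succ_odd]
    have hf : qf = f α β := by
      funext i
      ext n
      rw [(key n i).1, f, coeff_mk]
    have hg : qg = g α β := by
      funext i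
      ext n
      rw [(key n i).2, g, coeff_mk]
    simp only [Prod.mk.injEq]
    exact ⟨hf, hg, by rw [h5, hf], by rw [h10, hg]⟩
end
end

section
/- Define in ℝ[[u,z]] the bivariate series F_e = Σ_{i≥0} u^{2i}·f_{2i}, F_o = Σ_{i≥0} u^{2i+1}·f_{2i+1}, G_e = Σ_{i≥0} u^{2i}·g_{2i}, G_o = Σ_{i≥0} u^{2i+1}·g_{2i+1} (well defined by the support condition). Then the following four equations hold: u·F_e = βzu²·F_o + αz·F_o + u·(1 + β²z²·f_0); u·F_o = αzu²·F_e + βz·(F_e − f_0) + u²·αβz²·g_0; u·G_e = αzu²·G_o + βz·G_o + u·α²z²·g_0; u·G_o = βzu²·G_e + αz·(G_e − g_0) + u²·αβz²·f_0. -/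
open PowerSeries Filter

noncomputable section

/-- The variable `u`, viewing `ℝ[[u,z]]` as `(ℝ[[z]])[[u]]`. -/
def U : PowerSeries (PowerSeries ℝ) := PowerSeries.X

/-- The variable `z`, viewing `ℝ[[u,z]]` as `(ℝ[[z]])[[u]]`. -/
def Zv : PowerSeries (PowerSeries ℝ) := PowerSeries.C PowerSeries.X

/-- Real constants inside `ℝ[[u,z]]`. -/
def CC (r : ℝ) : PowerSeries (PowerSeries ℝ) := PowerSeries.C (PowerSeries.C r)

/-- The embedding of `ℝ[[z]]` into `ℝ[[u,z]]` as series constant in `u`. -/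
def CP (h : PowerSeries ℝ) : PowerSeries (PowerSeries ℝ) := PowerSeries.C h

private lemma key (a : PowerSeries ℝ) (k n : ℕ) (s : PowerSeries (PowerSeries ℝ)) :
    PowerSeries.coeff n (PowerSeries.C a * PowerSeries.X ^ k * s) =
      if k ≤ n then a * PowerSeries.coeff (n - k) s else 0 := by
  have h : (PowerSeries.C a : PowerSeries (PowerSeries ℝ)) * PowerSeries.X ^ k * s
      = PowerSeries.C a * (s * PowerSeries.X ^ k) := by ring
  rw [h, PowerSeries.coeff_C_mul, PowerSeries.coeff_mul_X_pow']
  split <;> simp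

private lemma key2 (a : PowerSeries ℝ) (k n : ℕ) :
    PowerSeries.coeff n (PowerSeries.C a * PowerSeries.X ^ k) =
      if n = k then a else 0 := by
  rw [PowerSeries.coeff_C_mul, PowerSeries.coeff_X_pow]
  split <;> simp

/-- The four functional equations satisfied by the even/odd bivariate generating
functions `F_e, F_o, G_e, G_o` of the one-step model. -/
theorem oneStep_four_equations
    (α β : ℝ) (hα0 : 0 < α) (hα1 : α < 1) (hβ : β = 1 - α)
    (f g : ℕ → PowerSeries ℝ) (P Q : PowerSeries ℝ)
    (hfe : ∀ k : ℕ, f (2 * k + 2) = C β * X * f (2 * k + 1) + C α * X * f (2 * k + 3))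
    (hfo : ∀ k : ℕ, f (2 * k + 3) = C α * X * f (2 * k + 2) + C β * X * f (2 * k + 4))
    (hf1 : f 1 = C α * X * f 0 + C β * X * f 2 + C (α * β) * X ^ 2 * g 0)
    (hf0 : f 0 = 1 + C (β ^ 2) * X ^ 2 * f 0 + C α * X * f 1)
    (hP : P = C β * X * f 0)
    (hge : ∀ k : ℕ, g (2 * k + 2) = C α * X * g (2 * k + 1) + C β * X * g (2 * k + 3))
    (hgo : ∀ k : ℕ, g (2 * k + 3) = C β * X * g (2 * k + 2) + C α * X * g (2 * k + 4))
    (hg1 : g 1 = C β * X * g 0 + C α * X * g 2 + C (α * β) * X ^ 2 * f 0)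
    (hg0 : g 0 = C (α ^ 2) * X ^ 2 * g 0 + C β * X * g 1)
    (hQ : Q = C α * X * g 0)
    (hsupp : ∀ n i : ℕ, n < i → coeff n (f i) = 0 ∧ coeff n (g i) = 0) :
    (U * PowerSeries.mk (fun n => if Even n then f n else 0) =
      CC β * Zv * U ^ 2 * PowerSeries.mk (fun n => if Even n then 0 else f n)
        + CC α * Zv * PowerSeries.mk (fun n => if Even n then 0 else f n)
        + U * (1 + CC (β ^ 2) * Zv ^ 2 * CP (f 0))) ∧
    (U * PowerSeries.mk (fun n => if Even n then 0 else f n) =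
      CC α * Zv * U ^ 2 * PowerSeries.mk (fun n => if Even n then f n else 0)
        + CC β * Zv * (PowerSeries.mk (fun n => if Even n then f n else 0) - CP (f 0))
        + U ^ 2 * CC (α * β) * Zv ^ 2 * CP (g 0)) ∧
    (U * PowerSeries.mk (fun n => if Even n then g n else 0) =
      CC α * Zv * U ^ 2 * PowerSeries.mk (fun n => if Even n then 0 else g n)
        + CC β * Zv * PowerSeries.mk (fun n => if Even n then 0 else g n)
        + U * CC (α ^ 2) * Zv ^ 2 * CP (g 0)) ∧
    (U * PowerSeries.mk (fun n => if Even n then 0 else g n) =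
      CC β * Zv * U ^ 2 * PowerSeries.mk (fun n => if Even n then g n else 0)
        + CC α * Zv * (PowerSeries.mk (fun n => if Even n then g n else 0) - CP (g 0))
        + U ^ 2 * CC (α * β) * Zv ^ 2 * CP (f 0)) := by
  refine ⟨?_, ?_, ?_, ?_⟩ <;> simp only [map_mul, map_pow] at hf1 hg1 hg0
  · -- equation 1
    have hc : (1 : PowerSeries ℝ) + C (β ^ 2) * X ^ 2 * f 0
        = f 0 - C α * X * f 1 := by linear_combination -hf0
    have T1 : U * PowerSeries.mk (fun n => if Even n then f n else 0)
        = PowerSeries.C (1 : PowerSeries ℝ) * PowerSeries.X ^ 1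
          * PowerSeries.mk (fun n => if Even n then f n else 0) := by simp [U]
    have T2 : CC β * Zv * U ^ 2 * PowerSeries.mk (fun n => if Even n then 0 else f n)
        = PowerSeries.C (C β * X) * PowerSeries.X ^ 2
          * PowerSeries.mk (fun n => if Even n then 0 else f n) := by
      simp [CC, Zv, U, map_mul]
    have T3 : CC α * Zv * PowerSeries.mk (fun n => if Even n then 0 else f n)
        = PowerSeries.C (C α * X) * PowerSeries.X ^ 0
          * PowerSeries.mk (fun n => if Even n then 0 else f n) := by
      simp [CC, Zv, map_mul]
    have T4 : U * (1 + CC (β ^ 2) * Zv ^ 2 * CP (f 0))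
        = PowerSeries.C (f 0 - C α * X * f 1) * PowerSeries.X ^ 1 := by
      rw [← hc]
      simp only [U, CC, Zv, CP, map_mul, map_pow, map_add, map_one]
      ring
    rw [T1, T2, T3, T4]
    refine PowerSeries.ext fun n => ?_
    simp only [map_add, key, key2, coeff_mk]
    match n with
    | 0 => simp
    | 1 => simp
    | (m+2) =>
      have h1 : (m+2) - 1 = m + 1 := by omega
      have h2 : (m+2) - 2 = m := by omega
      simp only [h1, h2, show (1:ℕ) ≤ m+2 by omega, show (2:ℕ) ≤ m+2 by omega,
        show (0:ℕ) ≤ m+2 by omega, show ¬ (m+2 = 1) by omega, if_true, if_false,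
        Nat.sub_zero, one_mul, add_zero]
      rcases Nat.even_or_odd m with ⟨k, rfl⟩ | ⟨k, rfl⟩
      · simp [parity_simps]
      · simp only [parity_simps]
        norm_num
        linear_combination hfe k
  · -- equation 2
    have T1 : U * PowerSeries.mk (fun n => if Even n then 0 else f n)
        = PowerSeries.C (1 : PowerSeries ℝ) * PowerSeries.X ^ 1
          * PowerSeries.mk (fun n => if Even n then 0 else f n) := by simp [U]
    have T2 : CC α * Zv * U ^ 2 * PowerSeries.mk (fun n => if Even n then f n else 0)
        = PowerSeries.C (C α * X) * PowerSeries.X ^ 2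
          * PowerSeries.mk (fun n => if Even n then f n else 0) := by
      simp [CC, Zv, U, map_mul]
    have T3 : CC β * Zv * (PowerSeries.mk (fun n => if Even n then f n else 0) - CP (f 0))
        = PowerSeries.C (C β * X) * PowerSeries.X ^ 0
          * (PowerSeries.mk (fun n => if Even n then f n else 0) - CP (f 0)) := by
      simp [CC, Zv, map_mul]
    have T4 : U ^ 2 * CC (α * β) * Zv ^ 2 * CP (g 0)
        = PowerSeries.C (C (α * β) * X ^ 2 * g 0) * PowerSeries.X ^ 2 := by
      simp only [U, CC, Zv, CP, map_mul, map_pow]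
      ring
    rw [T1, T2, T3, T4]
    refine PowerSeries.ext fun n => ?_
    simp only [map_add, key, key2, coeff_mk, map_sub, CP, PowerSeries.coeff_C]
    match n with
    | 0 => simp
    | 1 => simp
    | 2 =>
      norm_num
      linear_combination hf1
    | (m+3) =>
      have h1 : (m+3) - 1 = m + 2 := by omega
      have h2 : (m+3) - 2 = m + 1 := by omega
      simp only [h1, h2, show (1:ℕ) ≤ m+3 by omega, show (2:ℕ) ≤ m+3 by omega,
        show (0:ℕ) ≤ m+3 by omega, show ¬ (m+3 = 2) by omega, show ¬ (m+3 = 0) by omega,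
        if_true, if_false, Nat.sub_zero, one_mul, add_zero, sub_zero]
      rcases Nat.even_or_odd m with ⟨k, rfl⟩ | ⟨k, rfl⟩
      · simp [parity_simps]
      · simp only [parity_simps]
        norm_num
        linear_combination hfo k
  · -- equation 3
    have T1 : U * PowerSeries.mk (fun n => if Even n then g n else 0)
        = PowerSeries.C (1 : PowerSeries ℝ) * PowerSeries.X ^ 1
          * PowerSeries.mk (fun n => if Even n then g n else 0) := by simp [U]
    have T2 : CC α * Zv * U ^ 2 * PowerSeries.mk (fun n => if Even n then 0 else g n)
        = PowerSeries.C (C α * X) * PowerSeries.X ^ 2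
          * PowerSeries.mk (fun n => if Even n then 0 else g n) := by
      simp [CC, Zv, U, map_mul]
    have T3 : CC β * Zv * PowerSeries.mk (fun n => if Even n then 0 else g n)
        = PowerSeries.C (C β * X) * PowerSeries.X ^ 0
          * PowerSeries.mk (fun n => if Even n then 0 else g n) := by
      simp [CC, Zv, map_mul]
    have T4 : U * CC (α ^ 2) * Zv ^ 2 * CP (g 0)
        = PowerSeries.C (C (α ^ 2) * X ^ 2 * g 0) * PowerSeries.X ^ 1 := by
      simp only [U, CC, Zv, CP, map_mul, map_pow]
      ring
    rw [T1, T2, T3, T4]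
    refine PowerSeries.ext fun n => ?_
    simp only [map_add, key, key2, coeff_mk]
    match n with
    | 0 => simp
    | 1 =>
      norm_num
      linear_combination hg0
    | (m+2) =>
      have h1 : (m+2) - 1 = m + 1 := by omega
      have h2 : (m+2) - 2 = m := by omega
      simp only [h1, h2, show (1:ℕ) ≤ m+2 by omega, show (2:ℕ) ≤ m+2 by omega,
        show (0:ℕ) ≤ m+2 by omega, show ¬ (m+2 = 1) by omega, if_true, if_false,
        Nat.sub_zero, one_mul, add_zero]
      rcases Nat.even_or_odd m with ⟨k, rfl⟩ | ⟨k, rfl⟩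
      · simp [parity_simps]
      · simp only [parity_simps]
        norm_num
        linear_combination hge k
  · -- equation 4
    have T1 : U * PowerSeries.mk (fun n => if Even n then 0 else g n)
        = PowerSeries.C (1 : PowerSeries ℝ) * PowerSeries.X ^ 1
          * PowerSeries.mk (fun n => if Even n then 0 else g n) := by simp [U]
    have T2 : CC β * Zv * U ^ 2 * PowerSeries.mk (fun n => if Even n then g n else 0)
        = PowerSeries.C (C β * X) * PowerSeries.X ^ 2
          * PowerSeries.mk (fun n => if Even n then g n else 0) := by
      simp [CC, Zv, U, map_mul]
    have T3 : CC α * Zv * (PowerSeries.mk (fun n => if Even n then g n else 0) - CP (g 0))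
        = PowerSeries.C (C α * X) * PowerSeries.X ^ 0
          * (PowerSeries.mk (fun n => if Even n then g n else 0) - CP (g 0)) := by
      simp [CC, Zv, map_mul]
    have T4 : U ^ 2 * CC (α * β) * Zv ^ 2 * CP (f 0)
        = PowerSeries.C (C (α * β) * X ^ 2 * f 0) * PowerSeries.X ^ 2 := by
      simp only [U, CC, Zv, CP, map_mul, map_pow]
      ring
    rw [T1, T2, T3, T4]
    refine PowerSeries.ext fun n => ?_
    simp only [map_add, key, key2, coeff_mk, map_sub, CP, PowerSeries.coeff_C]
    match n with
    | 0 => simp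
    | 1 => simp
    | 2 =>
      norm_num
      linear_combination hg1
    | (m+3) =>
      have h1 : (m+3) - 1 = m + 2 := by omega
      have h2 : (m+3) - 2 = m + 1 := by omega
      simp only [h1, h2, show (1:ℕ) ≤ m+3 by omega, show (2:ℕ) ≤ m+3 by omega,
        show (0:ℕ) ≤ m+3 by omega, show ¬ (m+3 = 2) by omega, show ¬ (m+3 = 0) by omega,
        if_true, if_false, Nat.sub_zero, one_mul, add_zero, sub_zero]
      rcases Nat.even_or_odd m with ⟨k, rfl⟩ | ⟨k, rfl⟩
      · simp [parity_simps]
      · simp only [parity_simps]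
        norm_num
        linear_combination hgo k
end
end

section
/- Let W ∈ ℝ[[z]] be the unique formal power series with constant term 1 satisfying W² = (1−z²)·(1−(1−2α)²·z²). Then the generating function f_0 of the one-step model satisfies, in ℝ[[z]]: 4α²z⁴·(z−1)·(z+1)·(α−1)²·(−1 + z² − 3z²α + 3z²α²)·f_0 = (−3z⁴α² + α²Wz² + 3z²α² + 3z⁴α − αWz² − 3z²α − z⁴ + Wz² + 2z² − 1 − W)·(2z²α² − 2z²α + z² − 1 + W). -/
open PowerSeries Filter

noncomputable section

lemma oneStep_tail_aux (c d lam : PowerSeries ℝ) (hc : c ≠ 0) (u : ℕ → PowerSeries ℝ)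
    (hrec : ∀ k, c * u (k+2) + c * u k = d * u (k+1))
    (hq : c * lam^2 + c = d * lam)
    (hdvd : ∀ k, (X : PowerSeries ℝ) ^ k ∣ u k) : u 1 = lam * u 0 := by
  have hstep : ∀ k, lam * (u (k+2) - lam * u (k+1)) = u (k+1) - lam * u k := by
    intro k
    refine mul_left_cancel₀ hc ?_
    linear_combination lam * (hrec k) - u (k+1) * hq
  have hiter : ∀ m, u 1 - lam * u 0 = lam ^ m * (u (m+1) - lam * u m) := by
    intro m
    induction m with
    | zero => simp
    | succ n ih => rw [ih, ← hstep n]; ring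
  have hzero : u 1 - lam * u 0 = 0 := by
    ext n
    have hd : (X : PowerSeries ℝ) ^ (n+1) ∣ u 1 - lam * u 0 := by
      rw [hiter (n+1)]
      have h1 : (X : PowerSeries ℝ) ^ (n+1) ∣ u (n+2) :=
        dvd_trans (pow_dvd_pow X (by omega)) (hdvd (n+2))
      exact Dvd.dvd.mul_left (dvd_sub h1 (Dvd.dvd.mul_left (hdvd (n+1)) lam)) _
    rw [map_zero]
    exact X_pow_dvd_iff.mp hd n (by omega)
  linear_combination hzero

set_option maxHeartbeats 2000000 in
/-- Explicit algebraic equation for `f₀` in the one-step model, involving the square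
root series `W` of `(1-z²)(1-(1-2α)²z²)`. -/
theorem oneStep_f0_explicit
    (α β : ℝ) (hα0 : 0 < α) (hα1 : α < 1) (hβ : β = 1 - α)
    (f g : ℕ → PowerSeries ℝ) (P Q : PowerSeries ℝ)
    (hfe : ∀ k : ℕ, f (2 * k + 2) = C β * X * f (2 * k + 1) + C α * X * f (2 * k + 3))
    (hfo : ∀ k : ℕ, f (2 * k + 3) = C α * X * f (2 * k + 2) + C β * X * f (2 * k + 4))
    (hf1 : f 1 = C α * X * f 0 + C β * X * f 2 + C (α * β) * X ^ 2 * g 0)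
    (hf0 : f 0 = 1 + C (β ^ 2) * X ^ 2 * f 0 + C α * X * f 1)
    (hP : P = C β * X * f 0)
    (hge : ∀ k : ℕ, g (2 * k + 2) = C α * X * g (2 * k + 1) + C β * X * g (2 * k + 3))
    (hgo : ∀ k : ℕ, g (2 * k + 3) = C β * X * g (2 * k + 2) + C α * X * g (2 * k + 4))
    (hg1 : g 1 = C β * X * g 0 + C α * X * g 2 + C (α * β) * X ^ 2 * f 0)
    (hg0 : g 0 = C (α ^ 2) * X ^ 2 * g 0 + C β * X * g 1)
    (hQ : Q = C α * X * g 0)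
    (hsupp : ∀ n i : ℕ, n < i → coeff n (f i) = 0 ∧ coeff n (g i) = 0) (W : PowerSeries ℝ)
    (hW0 : constantCoeff W = 1)
    (hW2 : W ^ 2 = (1 - X ^ 2) * (1 - C ((1 - 2 * α) ^ 2) * X ^ 2)) :
    C (4 * α ^ 2) * X ^ 4 * (X - 1) * (X + 1) * C ((α - 1) ^ 2)
        * (-1 + X ^ 2 - C (3 * α) * X ^ 2 + C (3 * α ^ 2) * X ^ 2) * f 0 =
      (-(C (3 * α ^ 2)) * X ^ 4 + C (α ^ 2) * W * X ^ 2 + C (3 * α ^ 2) * X ^ 2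
          + C (3 * α) * X ^ 4 - C α * W * X ^ 2 - C (3 * α) * X ^ 2 - X ^ 4
          + W * X ^ 2 + 2 * X ^ 2 - 1 - W)
        * (C (2 * α ^ 2) * X ^ 2 - C (2 * α) * X ^ 2 + X ^ 2 - 1 + W) := by
  subst hβ
  have hab : α * (1 - α) ≠ 0 := by nlinarith
  have hCne : ∀ r : ℝ, r ≠ 0 → (C r) ≠ 0 := fun r hr h =>
    hr (by simpa using congrArg (constantCoeff) h)
  -- coefficient 1 of W vanishes
  have h1W : coeff 1 W = 0 := by
    have h := congrArg (coeff 1) hW2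
    have hr : ((1: ℝ⟦X⟧) - X^2)*(1 - C ((1-2*α)^2) * X^2)
        = 1 - X^2 - C ((1-2*α)^2) * X^2 + C ((1-2*α)^2) * X^4 := by ring
    rw [pow_two, coeff_mul, hr] at h
    simp [Finset.Nat.antidiagonal_succ, coeff_one, coeff_X_pow, coeff_C_mul,
      coeff_zero_eq_constantCoeff, hW0, coeff_mul_X_pow', Prod.map] at h
    linarith [h]
  -- X^2 divides 1 - S X^2 - W
  obtain ⟨lam', hL'⟩ : (X : ℝ⟦X⟧)^2 ∣ (1 - C (α^2 + (1-α)^2) * X^2 - W) := by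
    rw [X_pow_dvd_iff]
    intro m hm
    rw [map_sub, map_sub]
    interval_cases m <;>
      simp [coeff_one, coeff_mul_X_pow', coeff_zero_eq_constantCoeff, hW0, h1W]
  set lam : ℝ⟦X⟧ := C (2*(α*(1-α)))⁻¹ * lam' with hlam
  have hE10 : W = 1 - ((C α)^2 + (1 - C α)^2) * X^2 - 2*(C α)*(1 - C α)*X^2*lam := by
    have h2 : 2*(C α)*(1 - C α)*X^2*lam = X^2 * lam' := by
      rw [hlam]
      have : (2*(C α)*(1 - C α)) * C (2*(α*(1-α)))⁻¹ = 1 := by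
        have hne2 := mul_ne_zero (two_ne_zero (α := ℝ)) hab
        have hcc : (2*(C α)*(1 - C α)) = C (2*(α*(1-α))) := by
          simp only [map_mul, map_sub, map_one, map_ofNat]; ring
        rw [hcc, ← map_mul, mul_inv_cancel₀ hne2, map_one]
      calc 2*(C α)*(1 - C α)*X^2*lam
          = ((2*(C α)*(1 - C α)) * C (2*(α*(1-α)))⁻¹) * (X^2 * lam') := by rw [hlam]; ring
        _ = X^2 * lam' := by rw [this, one_mul]
    have h3 : (1 : ℝ⟦X⟧) - C (α^2 + (1-α)^2) * X^2 - W = X^2*lam' := hL'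
    have h4 : (C (α^2 + (1-α)^2) : ℝ⟦X⟧) = (C α)^2 + (1 - C α)^2 := by
      simp [map_add, map_pow, map_sub, map_one]
    linear_combination -h3 + h2 - X^2 * h4
  -- normalize the hypotheses
  simp only [map_mul, map_add, map_sub, map_pow, map_one, map_ofNat] at hfe hfo hf1 hf0 hge hgo hg1 hg0 hW2 ⊢
  -- quadratic equation for lam
  have hE9 : (C α)*(1 - C α)*X^2*lam^2 + (C α)*(1 - C α)*X^2
      = (1 - ((C α)^2 + (1 - C α)^2)*X^2)*lam := by
    have hne : (4*(C α)*(1 - C α)*X^2 : ℝ⟦X⟧) ≠ 0 := by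
      have h4 : (4*(C α)*(1 - C α)*X^2 : ℝ⟦X⟧) = C (4*(α*(1-α))) * X^2 := by
        simp only [map_mul, map_sub, map_one, map_ofNat]; ring
      rw [h4]
      exact mul_ne_zero (hCne _ (by nlinarith)) (pow_ne_zero 2 X_ne_zero)
    refine mul_left_cancel₀ hne ?_
    linear_combination hW2 - (W + 1 - ((C α)^2 + (1 - C α)^2)*X^2 - 2*(C α)*(1 - C α)*X^2*lam) * hE10
  -- divisibility of f i and g i by X^i
  have hXf : ∀ i, (X : ℝ⟦X⟧)^i ∣ f i := fun i => X_pow_dvd_iff.mpr (fun m hm => (hsupp m i hm).1)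
  have hXg : ∀ i, (X : ℝ⟦X⟧)^i ∣ g i := fun i => X_pow_dvd_iff.mpr (fun m hm => (hsupp m i hm).2)
  have hcne : ((C α)*(1 - C α)*X^2 : ℝ⟦X⟧) ≠ 0 := by
    have h4 : ((C α)*(1 - C α)*X^2 : ℝ⟦X⟧) = C (α*(1-α)) * X^2 := by
      simp only [map_mul, map_sub, map_one]
    rw [h4]
    exact mul_ne_zero (hCne _ hab) (pow_ne_zero 2 X_ne_zero)
  -- f 4 = lam * f 2
  have hf4 : f 4 = lam * f 2 := by
    have := oneStep_tail_aux ((C α)*(1 - C α)*X^2) (1 - ((C α)^2 + (1 - C α)^2)*X^2) lam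
      hcne (fun k => f (2*k+2))
      (fun k => by
        have h1 := hfe (k+1)
        have h2 := hfo k
        have h3 := hfo (k+1)
        rw [show 2*(k+1)+2 = 2*k+4 by ring, show 2*(k+1)+1 = 2*k+3 by ring,
          show 2*(k+1)+3 = 2*k+5 by ring] at h1
        rw [show 2*(k+1)+3 = 2*k+5 by ring, show 2*(k+1)+2 = 2*k+4 by ring,
          show 2*(k+1)+4 = 2*k+6 by ring] at h3
        show (C α)*(1 - C α)*X^2 * f (2*(k+2)+2) + (C α)*(1 - C α)*X^2 * f (2*k+2)
          = (1 - ((C α)^2 + (1 - C α)^2)*X^2) * f (2*(k+1)+2)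
        rw [show 2*(k+2)+2 = 2*k+6 by ring, show 2*(k+1)+2 = 2*k+4 by ring]
        linear_combination -h1 - (1 - C α)*X*h2 - (C α)*X*h3)
      hE9
      (fun k => dvd_trans (pow_dvd_pow X (by omega)) (hXf (2*k+2)))
    simpa using this
  -- g 4 = lam * g 2
  have hg4 : g 4 = lam * g 2 := by
    have := oneStep_tail_aux ((C α)*(1 - C α)*X^2) (1 - ((C α)^2 + (1 - C α)^2)*X^2) lam
      hcne (fun k => g (2*k+2))
      (fun k => by
        have h1 := hge (k+1)
        have h2 := hgo k
        have h3 := hgo (k+1)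
        rw [show 2*(k+1)+2 = 2*k+4 by ring, show 2*(k+1)+1 = 2*k+3 by ring,
          show 2*(k+1)+3 = 2*k+5 by ring] at h1
        rw [show 2*(k+1)+3 = 2*k+5 by ring, show 2*(k+1)+2 = 2*k+4 by ring,
          show 2*(k+1)+4 = 2*k+6 by ring] at h3
        show (C α)*(1 - C α)*X^2 * g (2*(k+2)+2) + (C α)*(1 - C α)*X^2 * g (2*k+2)
          = (1 - ((C α)^2 + (1 - C α)^2)*X^2) * g (2*(k+1)+2)
        rw [show 2*(k+2)+2 = 2*k+6 by ring, show 2*(k+1)+2 = 2*k+4 by ring]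
        linear_combination -h1 - (C α)*X*h2 - (1 - C α)*X*h3)
      hE9
      (fun k => dvd_trans (pow_dvd_pow X (by omega)) (hXg (2*k+2)))
    simpa using this
  have E3 := hfe 0
  have E4 := hfo 0
  have E7 := hge 0
  have E8 := hgo 0
  norm_num at E3 E4 E7 E8
  -- the closed linear equation for f 0
  have Heq : ((1 - (1 - C α)^2*X^2)*((1 - (C α)^2*X^2 - (C α)*(1 - C α)*X^2*lam) - (1 - C α)^2*X^2)*((1 - (C α)^2*X^2) * ((1 - (1 - C α)^2*X^2 - (C α)*(1 - C α)*X^2*lam) - (C α)^2*X^2) - (1 - C α)^2*X^2*(1 - (1 - C α)^2*X^2 - (C α)*(1 - C α)*X^2*lam)) - (C α)^2*X^2*(1 - (C α)^2*X^2 - (C α)*(1 - C α)*X^2*lam)*((1 - (C α)^2*X^2) * ((1 - (1 - C α)^2*X^2 - (C α)*(1 - C α)*X^2*lam) - (C α)^2*X^2) - (1 - C α)^2*X^2*(1 - (1 - C α)^2*X^2 - (C α)*(1 - C α)*X^2*lam)) - (C α)^3*(1 - C α)^3*X^6*(1 - (C α)^2*X^2 - (C α)*(1 - C α)*X^2*lam)*(1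 - (1 - C α)^2*X^2 - (C α)*(1 - C α)*X^2*lam)) * f 0 = (((1 - (C α)^2*X^2 - (C α)*(1 - C α)*X^2*lam) - (1 - C α)^2*X^2)*((1 - (C α)^2*X^2) * ((1 - (1 - C α)^2*X^2 - (C α)*(1 - C α)*X^2*lam) - (C α)^2*X^2) - (1 - C α)^2*X^2*(1 - (1 - C α)^2*X^2 - (C α)*(1 - C α)*X^2*lam))) := by
    linear_combination (((1 - (C α)^2*X^2) * ((1 - (1 - C α)^2*X^2 - (C α)*(1 - C α)*X^2*lam) - (C α)^2*X^2) - (1 - C α)^2*X^2*(1 - (1 - C α)^2*X^2 - (C α)*(1 - C α)*X^2*lam))*((1 - (C α)^2*X^2 - (C α)*(1 - C α)*X^2*lam) - (1 - C α)^2*X^2)) * hf0 + (((1 - (C α)^2*X^2) * ((1 - (1 - C α)^2*X^2 - (C α)*(1 - C α)*X^2*lam) - (C α)^2*X^2) - (1 - C α)^2*X^2*(1 - (1 - C α)^2*X^2 - (C α)*(1 - C α)*X^2*lam))*(C α)*X*(1 - (C α)^2*X^2 - (C α)*(1 - C α)*X^2*lam)) * hf1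
      + (((1 - (C α)^2*X^2) * ((1 - (1 - C α)^2*X^2 - (C α)*(1 - C α)*X^2*lam) - (C α)^2*X^2) - (1 - C α)^2*X^2*(1 - (1 - C α)^2*X^2 - (C α)*(1 - C α)*X^2*lam))*(C α)*(1 - C α)*X^2) * E3 + (((1 - (C α)^2*X^2) * ((1 - (1 - C α)^2*X^2 - (C α)*(1 - C α)*X^2*lam) - (C α)^2*X^2) - (1 - C α)^2*X^2*(1 - (1 - C α)^2*X^2 - (C α)*(1 - C α)*X^2*lam))*(C α)^2*(1 - C α)*X^3) * E4
      + (((1 - (C α)^2*X^2) * ((1 - (1 - C α)^2*X^2 - (C α)*(1 - C α)*X^2*lam) - (C α)^2*X^2) - (1 - C α)^2*X^2*(1 - (1 - C α)^2*X^2 - (C α)*(1 - C α)*X^2*lam))*(C α)^2*(1 - C α)^2*X^4) * hf4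
      + ((C α)^2*(1 - C α)*X^3*(1 - (C α)^2*X^2 - (C α)*(1 - C α)*X^2*lam)*((1 - (1 - C α)^2*X^2 - (C α)*(1 - C α)*X^2*lam) - (C α)^2*X^2)) * hg0
      + ((C α)^2*(1 - C α)^2*X^4*(1 - (C α)^2*X^2 - (C α)*(1 - C α)*X^2*lam)*(1 - (1 - C α)^2*X^2 - (C α)*(1 - C α)*X^2*lam)) * hg1
      + ((C α)^3*(1 - C α)^2*X^5*(1 - (C α)^2*X^2 - (C α)*(1 - C α)*X^2*lam)) * E7
      + ((C α)^3*(1 - C α)^3*X^6*(1 - (C α)^2*X^2 - (C α)*(1 - C α)*X^2*lam)) * E8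
      + ((C α)^4*(1 - C α)^3*X^7*(1 - (C α)^2*X^2 - (C α)*(1 - C α)*X^2*lam)) * hg4
  have hAcc : constantCoeff ((1 - (1 - C α)^2*X^2)*((1 - (C α)^2*X^2 - (C α)*(1 - C α)*X^2*lam) - (1 - C α)^2*X^2)*((1 - (C α)^2*X^2) * ((1 - (1 - C α)^2*X^2 - (C α)*(1 - C α)*X^2*lam) - (C α)^2*X^2) - (1 - C α)^2*X^2*(1 - (1 - C α)^2*X^2 - (C α)*(1 - C α)*X^2*lam)) - (C α)^2*X^2*(1 - (C α)^2*X^2 - (C α)*(1 - C α)*X^2*lam)*((1 - (C α)^2*X^2) * ((1 - (1 - C α)^2*X^2 - (C α)*(1 - C α)*X^2*lam) - (C α)^2*X^2) - (1 - C α)^2*X^2*(1 - (1 - C α)^2*X^2 - (C α)*(1 - C α)*X^2*lam)) - (C α)^3*(1 - C α)^3*X^6*(1 - (C α)^2*X^2 - (C α)*(1 - C α)*X^2*lam)*(1 - (1 - C α)^2*X^2 - (C α)*(1 - C α)*X^2*lam)) = 1 := by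
    simp
  have hAne : ((1 - (1 - C α)^2*X^2)*((1 - (C α)^2*X^2 - (C α)*(1 - C α)*X^2*lam) - (1 - C α)^2*X^2)*((1 - (C α)^2*X^2) * ((1 - (1 - C α)^2*X^2 - (C α)*(1 - C α)*X^2*lam) - (C α)^2*X^2) - (1 - C α)^2*X^2*(1 - (1 - C α)^2*X^2 - (C α)*(1 - C α)*X^2*lam)) - (C α)^2*X^2*(1 - (C α)^2*X^2 - (C α)*(1 - C α)*X^2*lam)*((1 - (C α)^2*X^2) * ((1 - (1 - C α)^2*X^2 - (C α)*(1 - C α)*X^2*lam) - (C α)^2*X^2) - (1 - C α)^2*X^2*(1 - (1 - C α)^2*X^2 - (C α)*(1 - C α)*X^2*lam)) - (C α)^3*(1 - C α)^3*X^6*(1 - (C α)^2*X^2 - (C α)*(1 - C α)*X^2*lam)*(1 - (1 - C α)^2*X^2 - (C α)*(1 - C α)*X^2*lam)) ≠ 0 := by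
    intro h
    rw [h] at hAcc
    simp at hAcc
  refine mul_left_cancel₀ hAne ?_
  linear_combination ((4*(C α)^2 * X^4 * (X - 1) * (X + 1) * ((C α) - 1)^2 * (-1 + X^2 - 3*(C α)*X^2 + 3*(C α)^2*X^2))) * Heq - (-4*(C α)*(X:ℝ⟦X⟧)^2 + 20*(C α)*(X:ℝ⟦X⟧)^4 - 40*(C α)*(X:ℝ⟦X⟧)^6 + 40*(C α)*(X:ℝ⟦X⟧)^8 - 20*(C α)*(X:ℝ⟦X⟧)^10 + 4*(C α)*(X:ℝ⟦X⟧)^12 + 4*(C α)^2*(X:ℝ⟦X⟧)^2 - 56*(C α)^2*(X:ℝ⟦X⟧)^4 + 8*(C α)^2*(X:ℝ⟦X⟧)^4*lam + 184*(C α)^2*(X:ℝ⟦X⟧)^6 - 32*(C α)^2*(X:ℝ⟦X⟧)^6*lam - 256*(C α)^2*(X:ℝ⟦X⟧)^8 + 48*(C α)^2*(X:ℝ⟦X⟧)^8*lam + 164*(C α)^2*(X:ℝ⟦X⟧)^10 - 32*(C α)^2*(X:ℝ⟦X⟧)^10*lam - 40*(C α)^2*(X:ℝ⟦X⟧)^12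 + 8*(C α)^2*(X:ℝ⟦X⟧)^12*lam + 72*(C α)^3*(X:ℝ⟦X⟧)^4 - 16*(C α)^3*(X:ℝ⟦X⟧)^4*lam - 404*(C α)^3*(X:ℝ⟦X⟧)^6 + 120*(C α)^3*(X:ℝ⟦X⟧)^6*lam - 4*(C α)^3*(X:ℝ⟦X⟧)^6*lam^2 + 780*(C α)^3*(X:ℝ⟦X⟧)^8 - 264*(C α)^3*(X:ℝ⟦X⟧)^8*lam + 12*(C α)^3*(X:ℝ⟦X⟧)^8*lam^2 - 636*(C α)^3*(X:ℝ⟦X⟧)^10 + 232*(C α)^3*(X:ℝ⟦X⟧)^10*lam - 12*(C α)^3*(X:ℝ⟦X⟧)^10*lam^2 + 188*(C α)^3*(X:ℝ⟦X⟧)^12 - 72*(C α)^3*(X:ℝ⟦X⟧)^12*lam + 4*(C α)^3*(X:ℝ⟦X⟧)^12*lam^2 - 36*(C α)^4*(X:ℝ⟦X⟧)^4 + 8*(C α)^4*(X:ℝ⟦X⟧)^4*lam + 492*(C α)^4*(X:ℝ⟦X⟧)^6 - 200*(C α)^4*(X:ℝ⟦X⟧)^6*lam + 12*(C α)^4*(X:ℝ⟦X⟧)^6*lam^2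 - 1416*(C α)^4*(X:ℝ⟦X⟧)^8 + 684*(C α)^4*(X:ℝ⟦X⟧)^8*lam - 56*(C α)^4*(X:ℝ⟦X⟧)^8*lam^2 + 1500*(C α)^4*(X:ℝ⟦X⟧)^10 - 800*(C α)^4*(X:ℝ⟦X⟧)^10*lam + 76*(C α)^4*(X:ℝ⟦X⟧)^10*lam^2 - 540*(C α)^4*(X:ℝ⟦X⟧)^12 + 308*(C α)^4*(X:ℝ⟦X⟧)^12*lam - 32*(C α)^4*(X:ℝ⟦X⟧)^12*lam^2 - 348*(C α)^5*(X:ℝ⟦X⟧)^6 + 168*(C α)^5*(X:ℝ⟦X⟧)^6*lam - 12*(C α)^5*(X:ℝ⟦X⟧)^6*lam^2 + 1668*(C α)^5*(X:ℝ⟦X⟧)^8 - 1032*(C α)^5*(X:ℝ⟦X⟧)^8*lam + 116*(C α)^5*(X:ℝ⟦X⟧)^8*lam^2 - 2364*(C α)^5*(X:ℝ⟦X⟧)^10 + 1672*(C α)^5*(X:ℝ⟦X⟧)^10*lam - 228*(C α)^5*(X:ℝ⟦X⟧)^10*lam^2 + 1044*(C α)^5*(X:ℝ⟦X⟧)^12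 - 804*(C α)^5*(X:ℝ⟦X⟧)^12*lam + 124*(C α)^5*(X:ℝ⟦X⟧)^12*lam^2 - 4*(C α)^5*(X:ℝ⟦X⟧)^14*lam + 116*(C α)^6*(X:ℝ⟦X⟧)^6 - 56*(C α)^6*(X:ℝ⟦X⟧)^6*lam + 4*(C α)^6*(X:ℝ⟦X⟧)^6*lam^2 - 1284*(C α)^6*(X:ℝ⟦X⟧)^8 + 960*(C α)^6*(X:ℝ⟦X⟧)^8*lam - 132*(C α)^6*(X:ℝ⟦X⟧)^8*lam^2 + 2580*(C α)^6*(X:ℝ⟦X⟧)^10 - 2312*(C α)^6*(X:ℝ⟦X⟧)^10*lam + 412*(C α)^6*(X:ℝ⟦X⟧)^10*lam^2 - 1412*(C α)^6*(X:ℝ⟦X⟧)^12 + 1404*(C α)^6*(X:ℝ⟦X⟧)^12*lam - 296*(C α)^6*(X:ℝ⟦X⟧)^12*lam^2 + 32*(C α)^6*(X:ℝ⟦X⟧)^14*lam - 4*(C α)^6*(X:ℝ⟦X⟧)^14*lam^2 + 624*(C α)^7*(X:ℝ⟦X⟧)^8 - 528*(C α)^7*(X:ℝ⟦X⟧)^8*lam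 + 80*(C α)^7*(X:ℝ⟦X⟧)^8*lam^2 - 1968*(C α)^7*(X:ℝ⟦X⟧)^10 + 2176*(C α)^7*(X:ℝ⟦X⟧)^10*lam - 480*(C α)^7*(X:ℝ⟦X⟧)^10*lam^2 + 1344*(C α)^7*(X:ℝ⟦X⟧)^12 - 1704*(C α)^7*(X:ℝ⟦X⟧)^12*lam + 472*(C α)^7*(X:ℝ⟦X⟧)^12*lam^2 - 116*(C α)^7*(X:ℝ⟦X⟧)^14*lam + 28*(C α)^7*(X:ℝ⟦X⟧)^14*lam^2 - 156*(C α)^8*(X:ℝ⟦X⟧)^8 + 132*(C α)^8*(X:ℝ⟦X⟧)^8*lam - 20*(C α)^8*(X:ℝ⟦X⟧)^8*lam^2 + 1032*(C α)^8*(X:ℝ⟦X⟧)^10 - 1384*(C α)^8*(X:ℝ⟦X⟧)^10*lam + 360*(C α)^8*(X:ℝ⟦X⟧)^10*lam^2 - 876*(C α)^8*(X:ℝ⟦X⟧)^12 + 1452*(C α)^8*(X:ℝ⟦X⟧)^12*lam - 520*(C α)^8*(X:ℝ⟦X⟧)^12*lam^2 + 248*(C α)^8*(X:ℝ⟦X⟧)^14*lam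 - 88*(C α)^8*(X:ℝ⟦X⟧)^14*lam^2 - 360*(C α)^9*(X:ℝ⟦X⟧)^10 + 560*(C α)^9*(X:ℝ⟦X⟧)^10*lam - 160*(C α)^9*(X:ℝ⟦X⟧)^10*lam^2 + 360*(C α)^9*(X:ℝ⟦X⟧)^12 - 860*(C α)^9*(X:ℝ⟦X⟧)^12*lam + 400*(C α)^9*(X:ℝ⟦X⟧)^12*lam^2 - 344*(C α)^9*(X:ℝ⟦X⟧)^14*lam + 164*(C α)^9*(X:ℝ⟦X⟧)^14*lam^2 + 72*(C α)^10*(X:ℝ⟦X⟧)^10 - 112*(C α)^10*(X:ℝ⟦X⟧)^10*lam + 32*(C α)^10*(X:ℝ⟦X⟧)^10*lam^2 - 72*(C α)^10*(X:ℝ⟦X⟧)^12 + 348*(C α)^10*(X:ℝ⟦X⟧)^12*lam - 212*(C α)^10*(X:ℝ⟦X⟧)^12*lam^2 + 324*(C α)^10*(X:ℝ⟦X⟧)^14*lam - 200*(C α)^10*(X:ℝ⟦X⟧)^14*lam^2 - 96*(C α)^11*(X:ℝ⟦X⟧)^12*lam + 72*(C α)^11*(X:ℝ⟦X⟧)^12*lam^2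 - 212*(C α)^11*(X:ℝ⟦X⟧)^14*lam + 164*(C α)^11*(X:ℝ⟦X⟧)^14*lam^2 + 16*(C α)^12*(X:ℝ⟦X⟧)^12*lam - 12*(C α)^12*(X:ℝ⟦X⟧)^12*lam^2 + 96*(C α)^12*(X:ℝ⟦X⟧)^14*lam - 88*(C α)^12*(X:ℝ⟦X⟧)^14*lam^2 - 28*(C α)^13*(X:ℝ⟦X⟧)^14*lam + 28*(C α)^13*(X:ℝ⟦X⟧)^14*lam^2 + 4*(C α)^14*(X:ℝ⟦X⟧)^14*lam - 4*(C α)^14*(X:ℝ⟦X⟧)^14*lam^2) * hE9 - (-1 - 1*W + 6*(X:ℝ⟦X⟧)^2 + 5*(X:ℝ⟦X⟧)^2*W - 15*(X:ℝ⟦X⟧)^4 - 10*(X:ℝ⟦X⟧)^4*W + 20*(X:ℝ⟦X⟧)^6 + 10*(X:ℝ⟦X⟧)^6*W - 15*(X:ℝ⟦X⟧)^8 - 5*(X:ℝ⟦X⟧)^8*W + 6*(X:ℝ⟦X⟧)^10 + 1*(X:ℝ⟦X⟧)^10*W - 1*(X:ℝ⟦X⟧)^12 - 11*(C α)*(X:ℝ⟦X⟧)^2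 - 9*(C α)*(X:ℝ⟦X⟧)^2*W + 4*(C α)*(X:ℝ⟦X⟧)^2*lam + 2*(C α)*(X:ℝ⟦X⟧)^2*lam*W + 55*(C α)*(X:ℝ⟦X⟧)^4 + 36*(C α)*(X:ℝ⟦X⟧)^4*W - 20*(C α)*(X:ℝ⟦X⟧)^4*lam - 8*(C α)*(X:ℝ⟦X⟧)^4*lam*W - 110*(C α)*(X:ℝ⟦X⟧)^6 - 54*(C α)*(X:ℝ⟦X⟧)^6*W + 40*(C α)*(X:ℝ⟦X⟧)^6*lam + 12*(C α)*(X:ℝ⟦X⟧)^6*lam*W + 110*(C α)*(X:ℝ⟦X⟧)^8 + 36*(C α)*(X:ℝ⟦X⟧)^8*W - 40*(C α)*(X:ℝ⟦X⟧)^8*lam - 8*(C α)*(X:ℝ⟦X⟧)^8*lam*W - 55*(C α)*(X:ℝ⟦X⟧)^10 - 9*(C α)*(X:ℝ⟦X⟧)^10*W + 20*(C α)*(X:ℝ⟦X⟧)^10*lam + 2*(C α)*(X:ℝ⟦X⟧)^10*lam*W + 11*(C α)*(X:ℝ⟦X⟧)^12 - 4*(C α)*(X:ℝ⟦X⟧)^12*lam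 + 11*(C α)^2*(X:ℝ⟦X⟧)^2 + 9*(C α)^2*(X:ℝ⟦X⟧)^2*W - 4*(C α)^2*(X:ℝ⟦X⟧)^2*lam - 2*(C α)^2*(X:ℝ⟦X⟧)^2*lam*W - 101*(C α)^2*(X:ℝ⟦X⟧)^4 - 66*(C α)^2*(X:ℝ⟦X⟧)^4*W + 56*(C α)^2*(X:ℝ⟦X⟧)^4*lam + 22*(C α)^2*(X:ℝ⟦X⟧)^4*lam*W - 5*(C α)^2*(X:ℝ⟦X⟧)^4*lam^2 - 1*(C α)^2*(X:ℝ⟦X⟧)^4*lam^2*W + 294*(C α)^2*(X:ℝ⟦X⟧)^6 + 144*(C α)^2*(X:ℝ⟦X⟧)^6*W - 184*(C α)^2*(X:ℝ⟦X⟧)^6*lam - 54*(C α)^2*(X:ℝ⟦X⟧)^6*lam*W + 20*(C α)^2*(X:ℝ⟦X⟧)^6*lam^2 + 3*(C α)^2*(X:ℝ⟦X⟧)^6*lam^2*W - 386*(C α)^2*(X:ℝ⟦X⟧)^8 - 126*(C α)^2*(X:ℝ⟦X⟧)^8*W + 256*(C α)^2*(X:ℝ⟦X⟧)^8*lam + 50*(C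 α)^2*(X:ℝ⟦X⟧)^8*lam*W - 30*(C α)^2*(X:ℝ⟦X⟧)^8*lam^2 - 3*(C α)^2*(X:ℝ⟦X⟧)^8*lam^2*W + 239*(C α)^2*(X:ℝ⟦X⟧)^10 + 39*(C α)^2*(X:ℝ⟦X⟧)^10*W - 164*(C α)^2*(X:ℝ⟦X⟧)^10*lam - 16*(C α)^2*(X:ℝ⟦X⟧)^10*lam*W + 20*(C α)^2*(X:ℝ⟦X⟧)^10*lam^2 + 1*(C α)^2*(X:ℝ⟦X⟧)^10*lam^2*W - 57*(C α)^2*(X:ℝ⟦X⟧)^12 + 40*(C α)^2*(X:ℝ⟦X⟧)^12*lam - 5*(C α)^2*(X:ℝ⟦X⟧)^12*lam^2 + 92*(C α)^3*(X:ℝ⟦X⟧)^4 + 60*(C α)^3*(X:ℝ⟦X⟧)^4*W - 72*(C α)^3*(X:ℝ⟦X⟧)^4*lam - 28*(C α)^3*(X:ℝ⟦X⟧)^4*lam*W + 10*(C α)^3*(X:ℝ⟦X⟧)^4*lam^2 + 2*(C α)^3*(X:ℝ⟦X⟧)^4*lam^2*W - 457*(C α)^3*(X:ℝ⟦X⟧)^6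 - 225*(C α)^3*(X:ℝ⟦X⟧)^6*W + 406*(C α)^3*(X:ℝ⟦X⟧)^6*lam + 118*(C α)^3*(X:ℝ⟦X⟧)^6*lam*W - 75*(C α)^3*(X:ℝ⟦X⟧)^6*lam^2 - 11*(C α)^3*(X:ℝ⟦X⟧)^6*lam^2*W + 2*(C α)^3*(X:ℝ⟦X⟧)^6*lam^3 + 819*(C α)^3*(X:ℝ⟦X⟧)^8 + 270*(C α)^3*(X:ℝ⟦X⟧)^8*W - 786*(C α)^3*(X:ℝ⟦X⟧)^8*lam - 152*(C α)^3*(X:ℝ⟦X⟧)^8*lam*W + 165*(C α)^3*(X:ℝ⟦X⟧)^8*lam^2 + 16*(C α)^3*(X:ℝ⟦X⟧)^8*lam^2*W - 6*(C α)^3*(X:ℝ⟦X⟧)^8*lam^3 - 635*(C α)^3*(X:ℝ⟦X⟧)^10 - 105*(C α)^3*(X:ℝ⟦X⟧)^10*W + 642*(C α)^3*(X:ℝ⟦X⟧)^10*lam + 62*(C α)^3*(X:ℝ⟦X⟧)^10*lam*W - 145*(C α)^3*(X:ℝ⟦X⟧)^10*lam^2 - 7*(C α)^3*(X:ℝ⟦X⟧)^10*lam^2*W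 + 6*(C α)^3*(X:ℝ⟦X⟧)^10*lam^3 + 181*(C α)^3*(X:ℝ⟦X⟧)^12 - 190*(C α)^3*(X:ℝ⟦X⟧)^12*lam + 45*(C α)^3*(X:ℝ⟦X⟧)^12*lam^2 - 2*(C α)^3*(X:ℝ⟦X⟧)^12*lam^3 - 46*(C α)^4*(X:ℝ⟦X⟧)^4 - 30*(C α)^4*(X:ℝ⟦X⟧)^4*W + 36*(C α)^4*(X:ℝ⟦X⟧)^4*lam + 14*(C α)^4*(X:ℝ⟦X⟧)^4*lam*W - 5*(C α)^4*(X:ℝ⟦X⟧)^4*lam^2 - 1*(C α)^4*(X:ℝ⟦X⟧)^4*lam^2*W + 451*(C α)^4*(X:ℝ⟦X⟧)^6 + 225*(C α)^4*(X:ℝ⟦X⟧)^6*W - 498*(C α)^4*(X:ℝ⟦X⟧)^6*lam - 144*(C α)^4*(X:ℝ⟦X⟧)^6*lam*W + 125*(C α)^4*(X:ℝ⟦X⟧)^6*lam^2 + 18*(C α)^4*(X:ℝ⟦X⟧)^6*lam^2*W - 6*(C α)^4*(X:ℝ⟦X⟧)^6*lam^3 - 1153*(C α)^4*(X:ℝ⟦X⟧)^8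 - 390*(C α)^4*(X:ℝ⟦X⟧)^8*W + 1444*(C α)^4*(X:ℝ⟦X⟧)^8*lam + 278*(C α)^4*(X:ℝ⟦X⟧)^8*lam*W - 429*(C α)^4*(X:ℝ⟦X⟧)^8*lam^2 - 41*(C α)^4*(X:ℝ⟦X⟧)^8*lam^2*W + 28*(C α)^4*(X:ℝ⟦X⟧)^8*lam^3 + 1137*(C α)^4*(X:ℝ⟦X⟧)^10 + 195*(C α)^4*(X:ℝ⟦X⟧)^10*W - 1537*(C α)^4*(X:ℝ⟦X⟧)^10*lam - 147*(C α)^4*(X:ℝ⟦X⟧)^10*lam*W + 503*(C α)^4*(X:ℝ⟦X⟧)^10*lam^2 + 24*(C α)^4*(X:ℝ⟦X⟧)^10*lam^2*W - 38*(C α)^4*(X:ℝ⟦X⟧)^10*lam^3 - 389*(C α)^4*(X:ℝ⟦X⟧)^12 + 554*(C α)^4*(X:ℝ⟦X⟧)^12*lam - 1*(C α)^4*(X:ℝ⟦X⟧)^12*lam*W - 194*(C α)^4*(X:ℝ⟦X⟧)^12*lam^2 + 16*(C α)^4*(X:ℝ⟦X⟧)^12*lam^3 + 1*(C α)^4*(X:ℝ⟦X⟧)^14*lam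 - 267*(C α)^5*(X:ℝ⟦X⟧)^6 - 135*(C α)^5*(X:ℝ⟦X⟧)^6*W + 354*(C α)^5*(X:ℝ⟦X⟧)^6*lam + 102*(C α)^5*(X:ℝ⟦X⟧)^6*lam*W - 105*(C α)^5*(X:ℝ⟦X⟧)^6*lam^2 - 15*(C α)^5*(X:ℝ⟦X⟧)^6*lam^2*W + 6*(C α)^5*(X:ℝ⟦X⟧)^6*lam^3 + 1105*(C α)^5*(X:ℝ⟦X⟧)^8 + 390*(C α)^5*(X:ℝ⟦X⟧)^8*W - 1726*(C α)^5*(X:ℝ⟦X⟧)^8*lam - 332*(C α)^5*(X:ℝ⟦X⟧)^8*lam*W + 651*(C α)^5*(X:ℝ⟦X⟧)^8*lam^2 + 62*(C α)^5*(X:ℝ⟦X⟧)^8*lam^2*W - 58*(C α)^5*(X:ℝ⟦X⟧)^8*lam^3 - 1429*(C α)^5*(X:ℝ⟦X⟧)^10 - 261*(C α)^5*(X:ℝ⟦X⟧)^10*W + 2474*(C α)^5*(X:ℝ⟦X⟧)^10*lam + 234*(C α)^5*(X:ℝ⟦X⟧)^10*lam*W - 1062*(C α)^5*(X:ℝ⟦X⟧)^10*lam^2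 - 50*(C α)^5*(X:ℝ⟦X⟧)^10*lam^2*W + 114*(C α)^5*(X:ℝ⟦X⟧)^10*lam^3 + 590*(C α)^5*(X:ℝ⟦X⟧)^12 - 1*(C α)^5*(X:ℝ⟦X⟧)^12*W - 1093*(C α)^5*(X:ℝ⟦X⟧)^12*lam + 7*(C α)^5*(X:ℝ⟦X⟧)^12*lam*W + 513*(C α)^5*(X:ℝ⟦X⟧)^12*lam^2 - 1*(C α)^5*(X:ℝ⟦X⟧)^12*lam^2*W - 62*(C α)^5*(X:ℝ⟦X⟧)^12*lam^3 + 1*(C α)^5*(X:ℝ⟦X⟧)^14 - 9*(C α)^5*(X:ℝ⟦X⟧)^14*lam + 3*(C α)^5*(X:ℝ⟦X⟧)^14*lam^2 + 89*(C α)^6*(X:ℝ⟦X⟧)^6 + 45*(C α)^6*(X:ℝ⟦X⟧)^6*W - 118*(C α)^6*(X:ℝ⟦X⟧)^6*lam - 34*(C α)^6*(X:ℝ⟦X⟧)^6*lam*W + 35*(C α)^6*(X:ℝ⟦X⟧)^6*lam^2 + 5*(C α)^6*(X:ℝ⟦X⟧)^6*lam^2*W - 2*(C α)^6*(X:ℝ⟦X⟧)^6*lam^3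 - 723*(C α)^6*(X:ℝ⟦X⟧)^8 - 270*(C α)^6*(X:ℝ⟦X⟧)^8*W + 1350*(C α)^6*(X:ℝ⟦X⟧)^8*lam + 260*(C α)^6*(X:ℝ⟦X⟧)^8*lam*W - 609*(C α)^6*(X:ℝ⟦X⟧)^8*lam^2 - 58*(C α)^6*(X:ℝ⟦X⟧)^8*lam^2*W + 66*(C α)^6*(X:ℝ⟦X⟧)^8*lam^3 + 1279*(C α)^6*(X:ℝ⟦X⟧)^10 + 255*(C α)^6*(X:ℝ⟦X⟧)^10*W - 2780*(C α)^6*(X:ℝ⟦X⟧)^10*lam - 260*(C α)^6*(X:ℝ⟦X⟧)^10*lam*W + 1488*(C α)^6*(X:ℝ⟦X⟧)^10*lam^2 + 68*(C α)^6*(X:ℝ⟦X⟧)^10*lam^2*W - 206*(C α)^6*(X:ℝ⟦X⟧)^10*lam^3 - 637*(C α)^6*(X:ℝ⟦X⟧)^12 + 6*(C α)^6*(X:ℝ⟦X⟧)^12*W + 1523*(C α)^6*(X:ℝ⟦X⟧)^12*lam - 23*(C α)^6*(X:ℝ⟦X⟧)^12*lam*W - 912*(C α)^6*(X:ℝ⟦X⟧)^12*lam^2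 + 6*(C α)^6*(X:ℝ⟦X⟧)^12*lam^2*W + 148*(C α)^6*(X:ℝ⟦X⟧)^12*lam^3 - 8*(C α)^6*(X:ℝ⟦X⟧)^14 + 39*(C α)^6*(X:ℝ⟦X⟧)^14*lam - 24*(C α)^6*(X:ℝ⟦X⟧)^14*lam^2 + 2*(C α)^6*(X:ℝ⟦X⟧)^14*lam^3 + 304*(C α)^7*(X:ℝ⟦X⟧)^8 + 120*(C α)^7*(X:ℝ⟦X⟧)^8*W - 664*(C α)^7*(X:ℝ⟦X⟧)^8*lam - 128*(C α)^7*(X:ℝ⟦X⟧)^8*lam*W + 336*(C α)^7*(X:ℝ⟦X⟧)^8*lam^2 + 32*(C α)^7*(X:ℝ⟦X⟧)^8*lam^2*W - 40*(C α)^7*(X:ℝ⟦X⟧)^8*lam^3 - 808*(C α)^7*(X:ℝ⟦X⟧)^10 - 180*(C α)^7*(X:ℝ⟦X⟧)^10*W + 2204*(C α)^7*(X:ℝ⟦X⟧)^10*lam + 204*(C α)^7*(X:ℝ⟦X⟧)^10*lam*W - 1422*(C α)^7*(X:ℝ⟦X⟧)^10*lam^2 - 62*(C α)^7*(X:ℝ⟦X⟧)^10*lam^2*W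 + 240*(C α)^7*(X:ℝ⟦X⟧)^10*lam^3 + 476*(C α)^7*(X:ℝ⟦X⟧)^12 - 16*(C α)^7*(X:ℝ⟦X⟧)^12*W - 1522*(C α)^7*(X:ℝ⟦X⟧)^12*lam + 46*(C α)^7*(X:ℝ⟦X⟧)^12*lam*W + 1134*(C α)^7*(X:ℝ⟦X⟧)^12*lam^2 - 16*(C α)^7*(X:ℝ⟦X⟧)^12*lam^2*W - 236*(C α)^7*(X:ℝ⟦X⟧)^12*lam^3 + 28*(C α)^7*(X:ℝ⟦X⟧)^14 - 104*(C α)^7*(X:ℝ⟦X⟧)^14*lam + 88*(C α)^7*(X:ℝ⟦X⟧)^14*lam^2 - 14*(C α)^7*(X:ℝ⟦X⟧)^14*lam^3 - 76*(C α)^8*(X:ℝ⟦X⟧)^8 - 30*(C α)^8*(X:ℝ⟦X⟧)^8*W + 166*(C α)^8*(X:ℝ⟦X⟧)^8*lam + 32*(C α)^8*(X:ℝ⟦X⟧)^8*lam*W - 84*(C α)^8*(X:ℝ⟦X⟧)^8*lam^2 - 8*(C α)^8*(X:ℝ⟦X⟧)^8*lam^2*W + 10*(C α)^8*(X:ℝ⟦X⟧)^8*lam^3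 + 352*(C α)^8*(X:ℝ⟦X⟧)^10 + 90*(C α)^8*(X:ℝ⟦X⟧)^10*W - 1211*(C α)^8*(X:ℝ⟦X⟧)^10*lam - 111*(C α)^8*(X:ℝ⟦X⟧)^10*lam*W + 918*(C α)^8*(X:ℝ⟦X⟧)^10*lam^2 + 38*(C α)^8*(X:ℝ⟦X⟧)^10*lam^2*W - 180*(C α)^8*(X:ℝ⟦X⟧)^10*lam^3 - 221*(C α)^8*(X:ℝ⟦X⟧)^12 + 25*(C α)^8*(X:ℝ⟦X⟧)^12*W + 1084*(C α)^8*(X:ℝ⟦X⟧)^12*lam - 61*(C α)^8*(X:ℝ⟦X⟧)^12*lam*W - 999*(C α)^8*(X:ℝ⟦X⟧)^12*lam^2 + 25*(C α)^8*(X:ℝ⟦X⟧)^12*lam^2*W + 260*(C α)^8*(X:ℝ⟦X⟧)^12*lam^3 - 55*(C α)^8*(X:ℝ⟦X⟧)^14 + 185*(C α)^8*(X:ℝ⟦X⟧)^14*lam - 193*(C α)^8*(X:ℝ⟦X⟧)^14*lam^2 + 44*(C α)^8*(X:ℝ⟦X⟧)^14*lam^3 - 100*(C α)^9*(X:ℝ⟦X⟧)^10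 - 30*(C α)^9*(X:ℝ⟦X⟧)^10*W + 440*(C α)^9*(X:ℝ⟦X⟧)^10*lam + 40*(C α)^9*(X:ℝ⟦X⟧)^10*lam*W - 375*(C α)^9*(X:ℝ⟦X⟧)^10*lam^2 - 15*(C α)^9*(X:ℝ⟦X⟧)^10*lam^2*W + 80*(C α)^9*(X:ℝ⟦X⟧)^10*lam^3 + 35*(C α)^9*(X:ℝ⟦X⟧)^12 - 25*(C α)^9*(X:ℝ⟦X⟧)^12*W - 535*(C α)^9*(X:ℝ⟦X⟧)^12*lam + 55*(C α)^9*(X:ℝ⟦X⟧)^12*lam*W + 620*(C α)^9*(X:ℝ⟦X⟧)^12*lam^2 - 25*(C α)^9*(X:ℝ⟦X⟧)^12*lam^2*W - 200*(C α)^9*(X:ℝ⟦X⟧)^12*lam^3 + 65*(C α)^9*(X:ℝ⟦X⟧)^14 - 227*(C α)^9*(X:ℝ⟦X⟧)^14*lam + 279*(C α)^9*(X:ℝ⟦X⟧)^14*lam^2 - 82*(C α)^9*(X:ℝ⟦X⟧)^14*lam^3 + 20*(C α)^10*(X:ℝ⟦X⟧)^10 + 6*(C α)^10*(X:ℝ⟦X⟧)^10*W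 - 88*(C α)^10*(X:ℝ⟦X⟧)^10*lam - 8*(C α)^10*(X:ℝ⟦X⟧)^10*lam*W + 75*(C α)^10*(X:ℝ⟦X⟧)^10*lam^2 + 3*(C α)^10*(X:ℝ⟦X⟧)^10*lam^2*W - 16*(C α)^10*(X:ℝ⟦X⟧)^10*lam^3 + 26*(C α)^10*(X:ℝ⟦X⟧)^12 + 16*(C α)^10*(X:ℝ⟦X⟧)^12*W + 173*(C α)^10*(X:ℝ⟦X⟧)^12*lam - 33*(C α)^10*(X:ℝ⟦X⟧)^12*lam*W - 267*(C α)^10*(X:ℝ⟦X⟧)^12*lam^2 + 16*(C α)^10*(X:ℝ⟦X⟧)^12*lam^2*W + 106*(C α)^10*(X:ℝ⟦X⟧)^12*lam^3 - 46*(C α)^10*(X:ℝ⟦X⟧)^14 + 195*(C α)^10*(X:ℝ⟦X⟧)^14*lam - 278*(C α)^10*(X:ℝ⟦X⟧)^14*lam^2 + 100*(C α)^10*(X:ℝ⟦X⟧)^14*lam^3 - 18*(C α)^11*(X:ℝ⟦X⟧)^12 - 6*(C α)^11*(X:ℝ⟦X⟧)^12*W - 36*(C α)^11*(X:ℝ⟦X⟧)^12*lam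 + 12*(C α)^11*(X:ℝ⟦X⟧)^12*lam*W + 78*(C α)^11*(X:ℝ⟦X⟧)^12*lam^2 - 6*(C α)^11*(X:ℝ⟦X⟧)^12*lam^2*W - 36*(C α)^11*(X:ℝ⟦X⟧)^12*lam^3 + 18*(C α)^11*(X:ℝ⟦X⟧)^14 - 118*(C α)^11*(X:ℝ⟦X⟧)^14*lam + 194*(C α)^11*(X:ℝ⟦X⟧)^14*lam^2 - 82*(C α)^11*(X:ℝ⟦X⟧)^14*lam^3 + 3*(C α)^12*(X:ℝ⟦X⟧)^12 + 1*(C α)^12*(X:ℝ⟦X⟧)^12*W + 6*(C α)^12*(X:ℝ⟦X⟧)^12*lam - 2*(C α)^12*(X:ℝ⟦X⟧)^12*lam*W - 13*(C α)^12*(X:ℝ⟦X⟧)^12*lam^2 + 1*(C α)^12*(X:ℝ⟦X⟧)^12*lam^2*W + 6*(C α)^12*(X:ℝ⟦X⟧)^12*lam^3 - 3*(C α)^12*(X:ℝ⟦X⟧)^14 + 50*(C α)^12*(X:ℝ⟦X⟧)^14*lam - 93*(C α)^12*(X:ℝ⟦X⟧)^14*lam^2 + 44*(C α)^12*(X:ℝ⟦X⟧)^14*lam^3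 - 14*(C α)^13*(X:ℝ⟦X⟧)^14*lam + 28*(C α)^13*(X:ℝ⟦X⟧)^14*lam^2 - 14*(C α)^13*(X:ℝ⟦X⟧)^14*lam^3 + 2*(C α)^14*(X:ℝ⟦X⟧)^14*lam - 4*(C α)^14*(X:ℝ⟦X⟧)^14*lam^2 + 2*(C α)^14*(X:ℝ⟦X⟧)^14*lam^3) * hE10
end
end
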